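/- arXiv:1807.03957 — 4 statements merged into one kernel-verified Lean document; each statement's English description precedes it below -/
import Mathlib

section
/- If ab = cd (with |ab|<1), then f(a,b)f(c,d) + f(−a,−b)f(−c,−d) = 2·f(ac,bd)·f(ad,bc), where f(a,b) := Σ_{k∈ℤ} a^{k(k+1)/2} b^{k(k−1)/2}. -/
open PowerSeries Finset

/-- Ramanujan's general theta function `f(a,b) = ∑_{k∈ℤ} a^{k(k+1)/2} b^{k(k-1)/2}`.
Note `k(k+1)/2` and `k(k-1)/2` are nonnegative integers for every `k ∈ ℤ`. -/
noncomputable def fR (a b : ℂ) : ℂ :=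
  ∑' k : ℤ, a ^ (k * (k + 1) / 2).toNat * b ^ (k * (k - 1) / 2).toNat

namespace RamanujanAux

noncomputable def t (a b : ℂ) (k : ℤ) : ℂ :=
  a ^ (k * (k + 1) / 2).toNat * b ^ (k * (k - 1) / 2).toNat

lemma fR_eq (a b : ℂ) : fR a b = ∑' k : ℤ, t a b k := rfl

lemma even1 (k : ℤ) : ∃ p, k * (k + 1) = p + p := Int.even_mul_succ_self k

lemma even2 (k : ℤ) : ∃ p, k * (k - 1) = p + p := by
  obtain ⟨p, hp⟩ := Int.even_mul_succ_self (k - 1)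
  exact ⟨p, by linear_combination hp⟩

lemma ediv2 (x y : ℤ) (h : x = y + y) : x / 2 = y := by omega

-- triangular-number identities
lemma I1 (r s : ℤ) :
    (r + s) * ((r + s) + 1) / 2 = r * (r + 1) / 2 + s * (s + 1) / 2 + r * s := by
  obtain ⟨p, hp⟩ := even1 r
  obtain ⟨q, hq⟩ := even1 s
  obtain ⟨w, hw⟩ := even1 (r + s)
  rw [ediv2 _ _ hp, ediv2 _ _ hq, ediv2 _ _ hw]
  have h2 : w + w = (p + q + r * s) + (p + q + r * s) := by linear_combination hp + hq - hw
  omega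

lemma I2 (r s : ℤ) :
    (r + s) * ((r + s) - 1) / 2 = r * (r - 1) / 2 + s * (s - 1) / 2 + r * s := by
  obtain ⟨p, hp⟩ := even2 r
  obtain ⟨q, hq⟩ := even2 s
  obtain ⟨w, hw⟩ := even2 (r + s)
  rw [ediv2 _ _ hp, ediv2 _ _ hq, ediv2 _ _ hw]
  have h2 : w + w = (p + q + r * s) + (p + q + r * s) := by linear_combination hp + hq - hw
  omega

lemma I3 (r s : ℤ) :
    (r - s) * ((r - s) + 1) / 2 = r * (r + 1) / 2 + s * (s - 1) / 2 - r * s := by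
  obtain ⟨p, hp⟩ := even1 r
  obtain ⟨q, hq⟩ := even2 s
  obtain ⟨w, hw⟩ := even1 (r - s)
  rw [ediv2 _ _ hp, ediv2 _ _ hq, ediv2 _ _ hw]
  have h2 : w + w = (p + q - r * s) + (p + q - r * s) := by linear_combination hp + hq - hw
  omega

lemma I4 (r s : ℤ) :
    (r - s) * ((r - s) - 1) / 2 = r * (r - 1) / 2 + s * (s + 1) / 2 - r * s := by
  obtain ⟨p, hp⟩ := even2 r
  obtain ⟨q, hq⟩ := even1 s
  obtain ⟨w, hw⟩ := even2 (r - s)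
  rw [ediv2 _ _ hp, ediv2 _ _ hq, ediv2 _ _ hw]
  have h2 : w + w = (p + q - r * s) + (p + q - r * s) := by linear_combination hp + hq - hw
  omega

lemma Ishift1 (n : ℤ) : (n + 1) * ((n + 1) + 1) / 2 = n * (n + 1) / 2 + (n + 1) := by
  obtain ⟨p, hp⟩ := even1 n
  obtain ⟨w, hw⟩ := even1 (n + 1)
  rw [ediv2 _ _ hp, ediv2 _ _ hw]
  have h2 : w + w = (p + (n + 1)) + (p + (n + 1)) := by linear_combination hp - hw
  omega

lemma Ishift2 (n : ℤ) : (n + 1) * ((n + 1) - 1) / 2 = n * (n - 1) / 2 + n := by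
  obtain ⟨p, hp⟩ := even2 n
  obtain ⟨w, hw⟩ := even2 (n + 1)
  rw [ediv2 _ _ hp, ediv2 _ _ hw]
  have h2 : w + w = (p + n) + (p + n) := by linear_combination hp - hw
  omega

lemma nn1 (k : ℤ) : 0 ≤ k * (k + 1) := by
  rcases le_or_gt 0 k with hk | hk
  · exact mul_nonneg hk (by linarith)
  · exact mul_nonneg_iff.2 (Or.inr ⟨by linarith, by linarith⟩)

lemma nn2 (k : ℤ) : 0 ≤ k * (k - 1) := by
  rcases le_or_gt 0 k with hk | hk
  · rcases le_or_gt 1 k with hk1 | hk1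
    · exact mul_nonneg hk (by linarith)
    · exact mul_nonneg_iff.2 (Or.inr ⟨by omega, by omega⟩)
  · exact mul_nonneg_iff.2 (Or.inr ⟨by linarith, by linarith⟩)

lemma cast1 (k : ℤ) : (((k * (k + 1) / 2).toNat : ℤ)) = k * (k + 1) / 2 :=
  Int.toNat_of_nonneg (Int.ediv_nonneg (nn1 k) (by norm_num))

lemma cast2 (k : ℤ) : (((k * (k - 1) / 2).toNat : ℤ)) = k * (k - 1) / 2 :=
  Int.toNat_of_nonneg (Int.ediv_nonneg (nn2 k) (by norm_num))

/-- monomial identity modulo `ab = cd` -/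
lemma aux_monomial (a b c d : ℂ) (h : a * b = c * d) (A B C D A' B' C' D' : ℕ) (k : ℤ)
    (hA : (A : ℤ) = A' + k) (hB : (B : ℤ) = B' + k)
    (hC : (C : ℤ) = C' - k) (hD : (D : ℤ) = D' - k) :
    a ^ A * b ^ B * c ^ C * d ^ D = a ^ A' * b ^ B' * c ^ C' * d ^ D' := by
  rcases le_or_gt 0 k with hk | hk
  · obtain ⟨n, rfl⟩ : ∃ n : ℕ, k = (n : ℤ) := ⟨k.toNat, (Int.toNat_of_nonneg hk).symm⟩
    have e1 : A = A' + n := by omega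
    have e2 : B = B' + n := by omega
    have e3 : C' = C + n := by omega
    have e4 : D' = D + n := by omega
    subst e1 e2 e3 e4
    have h' : a ^ n * b ^ n = c ^ n * d ^ n := by rw [← mul_pow, ← mul_pow, h]
    simp only [pow_add]
    linear_combination (a ^ A' * b ^ B' * c ^ C * d ^ D) * h'
  · obtain ⟨n, hn⟩ : ∃ n : ℕ, k = -(n : ℤ) := ⟨(-k).toNat, by omega⟩
    have e1 : A' = A + n := by omega
    have e2 : B' = B + n := by omega
    have e3 : C = C' + n := by omega
    have e4 : D = D' + n := by omega
    subst e1 e2 e3 e4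
    have h' : a ^ n * b ^ n = c ^ n * d ^ n := by rw [← mul_pow, ← mul_pow, h]
    simp only [pow_add]
    linear_combination (-(a ^ A * b ^ B * c ^ C' * d ^ D')) * h'

/-- the per-term key identity -/
lemma key (a b c d : ℂ) (h : a * b = c * d) (r s : ℤ) :
    t a b (r + s) * t c d (r - s) = t (a * c) (b * d) r * t (a * d) (b * c) s := by
  simp only [t, mul_pow]
  have main := aux_monomial a b c d h
    ((r + s) * ((r + s) + 1) / 2).toNat ((r + s) * ((r + s) - 1) / 2).toNat
    ((r - s) * ((r - s) + 1) / 2).toNat ((r - s) * ((r - s) - 1) / 2).toNat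
    ((r * (r + 1) / 2).toNat + (s * (s + 1) / 2).toNat)
    ((r * (r - 1) / 2).toNat + (s * (s - 1) / 2).toNat)
    ((r * (r + 1) / 2).toNat + (s * (s - 1) / 2).toNat)
    ((r * (r - 1) / 2).toNat + (s * (s + 1) / 2).toNat)
    (r * s)
    (by push_cast [cast1, cast2]; rw [I1])
    (by push_cast [cast1, cast2]; rw [I2])
    (by push_cast [cast1, cast2]; rw [I3])
    (by push_cast [cast1, cast2]; rw [I4])
  calc a ^ ((r + s) * ((r + s) + 1) / 2).toNat * b ^ ((r + s) * ((r + s) - 1) / 2).toNat *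
        (c ^ ((r - s) * ((r - s) + 1) / 2).toNat * d ^ ((r - s) * ((r - s) - 1) / 2).toNat)
      = a ^ ((r + s) * ((r + s) + 1) / 2).toNat * b ^ ((r + s) * ((r + s) - 1) / 2).toNat *
        c ^ ((r - s) * ((r - s) + 1) / 2).toNat * d ^ ((r - s) * ((r - s) - 1) / 2).toNat := by
        ring
    _ = a ^ ((r * (r + 1) / 2).toNat + (s * (s + 1) / 2).toNat) *
        b ^ ((r * (r - 1) / 2).toNat + (s * (s - 1) / 2).toNat) *
        c ^ ((r * (r + 1) / 2).toNat + (s * (s - 1) / 2).toNat) *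
        d ^ ((r * (r - 1) / 2).toNat + (s * (s + 1) / 2).toNat) := main
    _ = a ^ (r * (r + 1) / 2).toNat * c ^ (r * (r + 1) / 2).toNat *
          (b ^ (r * (r - 1) / 2).toNat * d ^ (r * (r - 1) / 2).toNat) *
          (a ^ (s * (s + 1) / 2).toNat * d ^ (s * (s + 1) / 2).toNat *
            (b ^ (s * (s - 1) / 2).toNat * c ^ (s * (s - 1) / 2).toNat)) := by
        simp only [pow_add]; ring

lemma t_neg_index (a b : ℂ) (k : ℤ) : t a b (-k) = t b a k := by
  unfold t
  rw [show (-k) * (-k + 1) = k * (k - 1) by ring, show (-k) * (-k - 1) = k * (k + 1) by ring,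
    mul_comm]

lemma t_neg_neg (a b : ℂ) (k : ℤ) :
    t (-a) (-b) k = (-1 : ℂ) ^ k.natAbs * t a b k := by
  unfold t
  rw [neg_pow a, neg_pow b]
  have hXY : (k * (k + 1) / 2).toNat + (k * (k - 1) / 2).toNat = k.natAbs * k.natAbs := by
    have hz : ((k * (k + 1) / 2).toNat + (k * (k - 1) / 2).toNat : ℤ)
        = ((k.natAbs * k.natAbs : ℕ) : ℤ) := by
      push_cast [cast1, cast2]
      obtain ⟨p, hp⟩ := even1 k
      obtain ⟨q, hq⟩ := even2 k
      rw [ediv2 _ _ hp, ediv2 _ _ hq, abs_mul_abs_self]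
      have h2 : (p + q) + (p + q) = k * k + k * k := by linear_combination -hp - hq
      linarith
    exact_mod_cast hz
  have hsign : (-1 : ℂ) ^ (k * (k + 1) / 2).toNat * (-1 : ℂ) ^ (k * (k - 1) / 2).toNat
      = (-1 : ℂ) ^ k.natAbs := by
    rw [← pow_add, hXY]
    rcases Nat.even_or_odd k.natAbs with he | ho
    · rw [(he.mul_right _).neg_one_pow, he.neg_one_pow]
    · rw [(ho.mul ho).neg_one_pow, ho.neg_one_pow]
  calc (-1:ℂ) ^ (k * (k + 1) / 2).toNat * a ^ (k * (k + 1) / 2).toNat *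
        ((-1:ℂ) ^ (k * (k - 1) / 2).toNat * b ^ (k * (k - 1) / 2).toNat)
      = ((-1:ℂ) ^ (k * (k + 1) / 2).toNat * (-1:ℂ) ^ (k * (k - 1) / 2).toNat) *
        (a ^ (k * (k + 1) / 2).toNat * b ^ (k * (k - 1) / 2).toNat) := by ring
    _ = (-1:ℂ) ^ k.natAbs * (a ^ (k * (k + 1) / 2).toNat * b ^ (k * (k - 1) / 2).toNat) := by
        rw [hsign]

lemma sign_mul (m n : ℤ) (hmn : Even (m + n)) :
    ((-1 : ℂ) ^ m.natAbs) * ((-1 : ℂ) ^ n.natAbs) = 1 := by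
  rcases Int.even_or_odd m with hm | hm
  · have hn : Even n := by
      rcases Int.even_or_odd n with h' | h'
      · exact h'
      · exact absurd hmn (by simp [Int.even_add, hm, Int.not_even_iff_odd.mpr h'])
    rw [(Int.natAbs_even.2 hm).neg_one_pow, (Int.natAbs_even.2 hn).neg_one_pow, one_mul]
  · have hn : Odd n := by
      rcases Int.even_or_odd n with h' | h'
      · exact absurd hmn (by simp [Int.even_add, h', Int.not_even_iff_odd.mpr hm])
      · exact h'
    rw [(Int.natAbs_odd.2 hm).neg_one_pow, (Int.natAbs_odd.2 hn).neg_one_pow]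
    norm_num

lemma sign_mul_neg (m n : ℤ) (hmn : ¬ Even (m + n)) :
    ((-1 : ℂ) ^ m.natAbs) * ((-1 : ℂ) ^ n.natAbs) = -1 := by
  rcases Int.even_or_odd m with hm | hm
  · have hn : Odd n := by
      rcases Int.even_or_odd n with h' | h'
      · exact absurd (by simp [Int.even_add, hm, h'] : Even (m + n)) hmn
      · exact h'
    rw [(Int.natAbs_even.2 hm).neg_one_pow, (Int.natAbs_odd.2 hn).neg_one_pow, one_mul]
  · have hn : Even n := by
      rcases Int.even_or_odd n with h' | h'
      · exact h'
      · exact absurd (by simp [Int.even_add, Int.not_even_iff_odd.mpr hm,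
          Int.not_even_iff_odd.mpr h'] : Even (m + n)) hmn
    rw [(Int.natAbs_odd.2 hm).neg_one_pow, (Int.natAbs_even.2 hn).neg_one_pow, mul_one]

lemma summable_nat (a b : ℂ) (h : ‖a * b‖ < 1) :
    Summable fun n : ℕ => ‖t a b (n : ℤ)‖ := by
  have hc0 : (0 : ℝ) ≤ ‖a‖ * ‖b‖ := by positivity
  have hc1 : ‖a‖ * ‖b‖ < 1 := by rwa [norm_mul] at h
  have htend : Filter.Tendsto (fun n : ℕ => ‖a‖ * (‖a‖ * ‖b‖) ^ n) Filter.atTop (nhds 0) := by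
    have := (tendsto_pow_atTop_nhds_zero_of_lt_one hc0 hc1).const_mul ‖a‖
    simpa using this
  have hev : ∀ᶠ n : ℕ in Filter.atTop, ‖a‖ * (‖a‖ * ‖b‖) ^ n < 1 / 2 :=
    htend.eventually_lt_const (by norm_num)
  apply summable_of_ratio_norm_eventually_le (r := 1 / 2) (by norm_num)
  filter_upwards [hev] with n hn
  rw [norm_norm, norm_norm]
  have hnn1 : (0 : ℤ) ≤ (n : ℤ) * ((n : ℤ) + 1) / 2 :=
    Int.ediv_nonneg (nn1 _) (by norm_num)
  have hnn2 : (0 : ℤ) ≤ (n : ℤ) * ((n : ℤ) - 1) / 2 :=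
    Int.ediv_nonneg (nn2 _) (by norm_num)
  have hX : (((n : ℤ) + 1) * (((n : ℤ) + 1) + 1) / 2).toNat
      = ((n : ℤ) * ((n : ℤ) + 1) / 2).toNat + (n + 1) := by
    have h1 := Ishift1 (n : ℤ)
    omega
  have hY : (((n : ℤ) + 1) * (((n : ℤ) + 1) - 1) / 2).toNat
      = ((n : ℤ) * ((n : ℤ) - 1) / 2).toNat + n := by
    have h1 := Ishift2 (n : ℤ)
    omega
  have expand : ‖t a b ((n : ℤ) + 1)‖
      = ‖t a b (n : ℤ)‖ * (‖a‖ * (‖a‖ * ‖b‖) ^ n) := by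
    unfold t
    rw [norm_mul, norm_mul, norm_pow, norm_pow, norm_pow, norm_pow, hX, hY,
      pow_add, pow_add, mul_pow]
    ring
  have hcast : ((n : ℤ) + 1) = ((n + 1 : ℕ) : ℤ) := by push_cast; ring
  rw [← hcast, expand]
  have hnn : (0 : ℝ) ≤ ‖t a b (n : ℤ)‖ := norm_nonneg _
  calc ‖t a b (n : ℤ)‖ * (‖a‖ * (‖a‖ * ‖b‖) ^ n)
      ≤ ‖t a b (n : ℤ)‖ * (1 / 2) := mul_le_mul_of_nonneg_left hn.le hnn
    _ = 1 / 2 * ‖t a b (n : ℤ)‖ := by ring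

lemma summable_norm_t (a b : ℂ) (h : ‖a * b‖ < 1) :
    Summable fun k : ℤ => ‖t a b k‖ := by
  refine Summable.of_nat_of_neg_add_one (summable_nat a b h) ?_
  have h' : ‖b * a‖ < 1 := by rwa [mul_comm] at h
  have hb := (summable_nat_add_iff 1).2 (summable_nat b a h')
  apply hb.congr
  intro n
  have hidx : ((n + 1 : ℕ) : ℤ) = (n : ℤ) + 1 := by push_cast; ring
  have ht : t b a ((n + 1 : ℕ) : ℤ) = t a b (-((n : ℤ) + 1)) := by
    rw [hidx]
    exact (t_neg_index a b ((n : ℤ) + 1)).symm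
  rw [ht]

end RamanujanAux

open RamanujanAux in
/-- If `ab = cd` (with `|ab| < 1`), then
`f(a,b)f(c,d) + f(-a,-b)f(-c,-d) = 2 f(ac,bd) f(ad,bc)`. -/
theorem ramanujan_theta_add (a b c d : ℂ) (habs : ‖a * b‖ < 1)
    (h : a * b = c * d) :
    fR a b * fR c d + fR (-a) (-b) * fR (-c) (-d) =
      2 * fR (a * c) (b * d) * fR (a * d) (b * c) := by
  have hab : ‖a * b‖ < 1 := habs
  have hcd : ‖c * d‖ < 1 := by rwa [← h]
  have hprod : ‖(a * c) * (b * d)‖ < 1 := by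
    rw [show (a * c) * (b * d) = (a * b) * (c * d) by ring, norm_mul]
    nlinarith [norm_nonneg (a * b), norm_nonneg (c * d)]
  have hprod2 : ‖(a * d) * (b * c)‖ < 1 := by
    rw [show (a * d) * (b * c) = (a * b) * (c * d) by ring, norm_mul]
    nlinarith [norm_nonneg (a * b), norm_nonneg (c * d)]
  have hnegab : ‖(-a) * (-b)‖ < 1 := by rwa [neg_mul_neg]
  have hnegcd : ‖(-c) * (-d)‖ < 1 := by rwa [neg_mul_neg]
  have S1 := summable_norm_t a b hab
  have S2 := summable_norm_t c d hcd
  have S3 := summable_norm_t (-a) (-b) hnegab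
  have S4 := summable_norm_t (-c) (-d) hnegcd
  have S5 := summable_norm_t (a * c) (b * d) hprod
  have S6 := summable_norm_t (a * d) (b * c) hprod2
  have P1 : Summable fun p : ℤ × ℤ => t a b p.1 * t c d p.2 :=
    summable_mul_of_summable_norm S1 S2
  have P2 : Summable fun p : ℤ × ℤ => t (-a) (-b) p.1 * t (-c) (-d) p.2 :=
    summable_mul_of_summable_norm S3 S4
  -- the reindexing map
  have hinj : Function.Injective (fun q : ℤ × ℤ => ((q.1 + q.2, q.1 - q.2) : ℤ × ℤ)) := by
    intro x y hxy
    simp only [Prod.mk.injEq] at hxy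
    have h1 : x.1 = y.1 ∧ x.2 = y.2 := by omega
    exact Prod.ext h1.1 h1.2
  set F : ℤ × ℤ → ℂ :=
    fun p => t a b p.1 * t c d p.2 + t (-a) (-b) p.1 * t (-c) (-d) p.2 with hF
  have hFodd : ∀ p : ℤ × ℤ, ¬ Even (p.1 + p.2) → F p = 0 := by
    intro p hp
    have hs := sign_mul_neg p.1 p.2 hp
    simp only [hF, t_neg_neg]
    linear_combination (t a b p.1 * t c d p.2) * hs
  have hsupp : Function.support F ⊆
      Set.range (fun q : ℤ × ℤ => ((q.1 + q.2, q.1 - q.2) : ℤ × ℤ)) := by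
    intro p hp
    have heven : Even (p.1 + p.2) := by
      by_contra hodd
      exact hp (hFodd p hodd)
    obtain ⟨r, hr⟩ := heven
    rw [Set.mem_range]
    refine ⟨(r, p.1 - r), ?_⟩
    obtain ⟨p1, p2⟩ := p
    simp only [Prod.mk.injEq]
    simp only at hr
    omega
  have pointwise : ∀ q : ℤ × ℤ,
      F (q.1 + q.2, q.1 - q.2) = 2 * (t (a * c) (b * d) q.1 * t (a * d) (b * c) q.2) := by
    intro q
    have hev : Even ((q.1 + q.2) + (q.1 - q.2)) := ⟨q.1, by ring⟩
    have hs := sign_mul (q.1 + q.2) (q.1 - q.2) hev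
    have hkey := key a b c d h q.1 q.2
    simp only [hF, t_neg_neg]
    linear_combination 2 * hkey + (t a b (q.1 + q.2) * t c d (q.1 - q.2)) * hs
  calc fR a b * fR c d + fR (-a) (-b) * fR (-c) (-d)
      = (∑' p : ℤ × ℤ, t a b p.1 * t c d p.2)
        + ∑' p : ℤ × ℤ, t (-a) (-b) p.1 * t (-c) (-d) p.2 := by
        rw [fR_eq, fR_eq, fR_eq, fR_eq, tsum_mul_tsum_of_summable_norm S1 S2,
          tsum_mul_tsum_of_summable_norm S3 S4]
    _ = ∑' p : ℤ × ℤ, F p := (Summable.tsum_add P1 P2).symm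
    _ = ∑' q : ℤ × ℤ, F (q.1 + q.2, q.1 - q.2) := (hinj.tsum_eq hsupp).symm
    _ = ∑' q : ℤ × ℤ, 2 * (t (a * c) (b * d) q.1 * t (a * d) (b * c) q.2) :=
        tsum_congr pointwise
    _ = 2 * ∑' q : ℤ × ℤ, t (a * c) (b * d) q.1 * t (a * d) (b * c) q.2 := tsum_mul_left
    _ = 2 * (fR (a * c) (b * d) * fR (a * d) (b * c)) := by
        rw [fR_eq, fR_eq, tsum_mul_tsum_of_summable_norm S5 S6]
    _ = 2 * fR (a * c) (b * d) * fR (a * d) (b * c) := (mul_assoc _ _ _).symm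
end

section
/- If ab = cd (with |ab|<1), then f(a,b)f(c,d) − f(−a,−b)f(−c,−d) = 2a·f(b/c, ac²d)·f(b/d, acd²), where f(a,b) := Σ_{k∈ℤ} a^{k(k+1)/2} b^{k(k−1)/2}. -/
open PowerSeries Finset

noncomputable def gT (x y : ℂ) (k : ℤ) : ℂ :=
  x ^ (k * (k + 1) / 2).toNat * y ^ (k * (k - 1) / 2).toNat

lemma e2_nonneg (k : ℤ) : 0 ≤ k * (k - 1) / 2 := by
  apply Int.ediv_nonneg _ (by norm_num)
  rcases le_or_gt 1 k with hk | hk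
  · nlinarith
  · nlinarith

lemma e1_nonneg (k : ℤ) : 0 ≤ k * (k + 1) / 2 := by
  apply Int.ediv_nonneg _ (by norm_num)
  rcases le_or_gt 0 k with hk | hk
  · nlinarith
  · nlinarith

lemma two_e2 (k : ℤ) : 2 * (k * (k - 1) / 2) = k * (k - 1) := by
  obtain ⟨r, hr⟩ : Even (k * (k - 1)) := by
    rcases Int.even_or_odd k with h | h
    · exact h.mul_right _
    · obtain ⟨r, hr⟩ := h
      exact ⟨2 * r ^ 2 + r, by rw [hr]; ring⟩
  omega

lemma e1_eq (k : ℤ) : k * (k + 1) / 2 = k * (k - 1) / 2 + k := by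
  have h1 : 2 * (k * (k + 1) / 2) = k * (k + 1) := by
    obtain ⟨r, hr⟩ : Even (k * (k + 1)) := Int.even_mul_succ_self k
    omega
  have h2 := two_e2 k
  have : k * (k + 1) = k * (k - 1) + 2 * k := by ring
  omega

lemma gT_eq {x y : ℂ} (hx : x ≠ 0) (hy : y ≠ 0) (k : ℤ) :
    gT x y k = (x * y) ^ (k * (k - 1) / 2) * x ^ k := by
  rw [gT, ← zpow_natCast x, ← zpow_natCast y, Int.toNat_of_nonneg (e1_nonneg k),
    Int.toNat_of_nonneg (e2_nonneg k), e1_eq, zpow_add₀ hx, mul_zpow]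
  ring

lemma gT_ne_zero {x y : ℂ} (hx : x ≠ 0) (hy : y ≠ 0) (k : ℤ) : gT x y k ≠ 0 :=
  mul_ne_zero (pow_ne_zero _ hx) (pow_ne_zero _ hy)

lemma gT_neg (x y : ℂ) (k : ℤ) : gT x y (-k) = gT y x k := by
  rw [gT, gT, show (-k) * (-k + 1) = k * (k - 1) by ring, show (-k) * (-k - 1) = k * (k + 1) by ring,
    mul_comm]

lemma gT_neg_neg {x y : ℂ} (hx : x ≠ 0) (hy : y ≠ 0) (k : ℤ) :
    gT (-x) (-y) k = (-1) ^ k * gT x y k := by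
  have hneg : (-x) ^ k = (-1) ^ k * x ^ k := by rw [← neg_one_mul, mul_zpow]
  rw [gT_eq (neg_ne_zero.2 hx) (neg_ne_zero.2 hy), gT_eq hx hy,
    show (-x) * (-y) = x * y by ring, hneg]
  ring

open Filter in
lemma summable_gT {x y : ℂ} (hx : x ≠ 0) (hy : y ≠ 0) (hxy : ‖x * y‖ < 1) :
    Summable (gT x y) := by
  have key : ∀ x y : ℂ, x ≠ 0 → y ≠ 0 → ‖x * y‖ < 1 →
      Summable fun n : ℕ => gT x y (n : ℤ) := by
    intro x y hx hy hxy
    have hstep : ∀ k : ℤ, gT x y (k + 1) = gT x y k * ((x * y) ^ k * x) := by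
      intro k
      rw [gT_eq hx hy, gT_eq hx hy,
        show (k + 1) * (k + 1 - 1) = k * (k + 1) by ring, e1_eq, zpow_add₀ (mul_ne_zero hx hy),
        zpow_add₀ hx, zpow_one]
      ring
    apply summable_of_ratio_test_tendsto_lt_one (l := 0) one_pos
      (Filter.Eventually.of_forall fun n => gT_ne_zero hx hy _)
    have hratio : ∀ n : ℕ, ‖gT x y ((n : ℤ) + 1)‖ / ‖gT x y (n : ℤ)‖ = ‖x * y‖ ^ n * ‖x‖ := by
      intro n
      rw [hstep, norm_mul, mul_div_cancel_left₀ _ (norm_ne_zero_iff.2 (gT_ne_zero hx hy _)),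
        norm_mul, norm_zpow, zpow_natCast]
    have : Filter.Tendsto (fun n : ℕ => ‖x * y‖ ^ n * ‖x‖) atTop (nhds 0) := by
      simpa using (tendsto_pow_atTop_nhds_zero_of_lt_one (norm_nonneg (x * y)) hxy).mul_const ‖x‖
    refine this.congr fun n => ?_
    rw [← hratio n]
    push_cast
    ring_nf
  refine Summable.of_nat_of_neg (key x y hx hy hxy) ?_
  simp only [gT_neg]
  exact key y x hy hx (by rwa [mul_comm])
lemma gT_key (a b c d : ℂ) (ha : a ≠ 0) (hb : b ≠ 0) (hc : c ≠ 0)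
    (hd : d ≠ 0) (h : a * b = c * d) (t u : ℤ) :
    gT a b (1 - t - u) * gT c d (u - t) =
      a * (gT (b / c) (a * c ^ 2 * d) t * gT (b / d) (a * c * d ^ 2) u) := by
  have hbc : b / c ≠ 0 := div_ne_zero hb hc
  have hbd : b / d ≠ 0 := div_ne_zero hb hd
  have hacd : a * c ^ 2 * d ≠ 0 := mul_ne_zero (mul_ne_zero ha (pow_ne_zero _ hc)) hd
  have hacd2 : a * c * d ^ 2 ≠ 0 := mul_ne_zero (mul_ne_zero ha hc) (pow_ne_zero _ hd)
  have hq : a * b ≠ 0 := mul_ne_zero ha hb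
  have h1 : b / c * (a * c ^ 2 * d) = (a * b) ^ 2 := by
    rw [div_mul_eq_mul_div, div_eq_iff hc]
    linear_combination (-(a*b*c)) * h
  have h2 : b / d * (a * c * d ^ 2) = (a * b) ^ 2 := by
    rw [div_mul_eq_mul_div, div_eq_iff hd]
    linear_combination (-(a*b*d)) * h
  rw [gT_eq ha hb, gT_eq hc hd, gT_eq hbc hacd, gT_eq hbd hacd2, h1, h2, ← h]
  -- exponent identities
  set X1 := (1 - t - u) * (1 - t - u - 1) / 2 with hX1
  set X2 := (u - t) * (u - t - 1) / 2 with hX2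
  set X3 := t * (t - 1) / 2 with hX3
  set X4 := u * (u - 1) / 2 with hX4
  have hexp : X1 + X2 = 2 * X3 + 2 * X4 + t := by
    have h1 := two_e2 (1 - t - u)
    have h2 := two_e2 (u - t)
    have h3 := two_e2 t
    have h4 := two_e2 u
    have : 2 * (X1 + X2) = 2 * (2 * X3 + 2 * X4 + t) := by
      rw [hX1, hX2, hX3, hX4]
      linear_combination h1 + h2 - 2 * h3 - 2 * h4
    omega
  have hb' : b = (a * b) / a := by field_simp
  have hd' : d = (a * b) / c := by rw [h]; field_simp
  rw [show b / c = (a * b) / (a * c) by rw [hb']; field_simp,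
    show b / d = c / a by rw [hb', hd']; field_simp]
  rw [show ((a * b) ^ 2 : ℂ) ^ X3 = (a*b) ^ X3 * (a*b) ^ X3 by rw [sq, mul_zpow],
    show ((a * b) ^ 2 : ℂ) ^ X4 = (a*b) ^ X4 * (a*b) ^ X4 by rw [sq, mul_zpow],
    div_zpow, div_zpow, mul_zpow a c t]
  have hce : a * c ≠ 0 := mul_ne_zero ha hc
  field_simp
  have hden : a ^ t * c ^ t * a ^ u ≠ 0 :=
    mul_ne_zero (mul_ne_zero (zpow_ne_zero _ ha) (zpow_ne_zero _ hc)) (zpow_ne_zero _ ha)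
  suffices hs : (a*b) ^ X1 * a ^ (1 - t - u) * ((a*b) ^ X2 * c ^ (u - t)) * (a ^ t * c ^ t * a ^ u) = a * ((a*b) ^ X3 * (a*b) ^ X3 * (a*b) ^ t * ((a*b) ^ X4 * (a*b) ^ X4 * c ^ u)) by linear_combination hs
  calc (a*b) ^ X1 * a ^ (1 - t - u) * ((a*b) ^ X2 * c ^ (u - t)) * (a ^ t * c ^ t * a ^ u)
      = ((a*b) ^ X1 * (a*b) ^ X2) * (a ^ (1 - t - u) * a ^ t * a ^ u) * (c ^ (u - t) * c ^ t) := by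
        ring
    _ = (a*b) ^ (X1 + X2) * a ^ ((1 - t - u) + t + u) * c ^ ((u - t) + t) := by
        rw [← zpow_add₀ hq, ← zpow_add₀ ha, ← zpow_add₀ ha, ← zpow_add₀ hc]
    _ = (a*b) ^ (X3 + X3 + (X4 + X4) + t) * a * c ^ u := by
        rw [hexp, show (1 - t - u + t + u : ℤ) = 1 by ring, show (u - t + t : ℤ) = u by ring,
          show (2 * X3 + 2 * X4 + t : ℤ) = X3 + X3 + (X4 + X4) + t by ring, zpow_one]
    _ = a * ((a*b) ^ X3 * (a*b) ^ X3 * (a*b) ^ t * ((a*b) ^ X4 * (a*b) ^ X4 * c ^ u)) := by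
        rw [zpow_add₀ hq, zpow_add₀ hq, zpow_add₀ hq, zpow_add₀ hq]
        ring


lemma fR_eq (x y : ℂ) : fR x y = ∑' k : ℤ, gT x y k := rfl

/-- If `ab = cd` (with `|ab| < 1`, `a,b,c,d ≠ 0`), then
`f(a,b)f(c,d) - f(-a,-b)f(-c,-d) = 2a f(b/c, ac²d) f(b/d, acd²)`. -/
theorem ramanujan_theta_sub (a b c d : ℂ) (ha : a ≠ 0) (hb : b ≠ 0) (hc : c ≠ 0)
    (hd : d ≠ 0) (habs : ‖a * b‖ < 1) (h : a * b = c * d) :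
    fR a b * fR c d - fR (-a) (-b) * fR (-c) (-d) =
      2 * a * fR (b / c) (a * c ^ 2 * d) * fR (b / d) (a * c * d ^ 2) := by
  have hnorm : ‖a * b‖ < 1 := by exact habs
  have hq : a * b ≠ 0 := mul_ne_zero ha hb
  have hbc : b / c ≠ 0 := div_ne_zero hb hc
  have hbd : b / d ≠ 0 := div_ne_zero hb hd
  have hacd : a * c ^ 2 * d ≠ 0 := mul_ne_zero (mul_ne_zero ha (pow_ne_zero _ hc)) hd
  have hacd2 : a * c * d ^ 2 ≠ 0 := mul_ne_zero (mul_ne_zero ha hc) (pow_ne_zero _ hd)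
  have h1 : b / c * (a * c ^ 2 * d) = (a * b) ^ 2 := by
    rw [div_mul_eq_mul_div, div_eq_iff hc]
    linear_combination (-(a*b*c)) * h
  have h2 : b / d * (a * c * d ^ 2) = (a * b) ^ 2 := by
    rw [div_mul_eq_mul_div, div_eq_iff hd]
    linear_combination (-(a*b*d)) * h
  have hn2 : ‖((a * b) ^ 2 : ℂ)‖ < 1 := by
    rw [norm_pow]
    exact pow_lt_one₀ (norm_nonneg _) hnorm (by norm_num)
  have N1 : Summable fun k : ℤ => ‖gT a b k‖ :=
    summable_norm_iff.mpr (summable_gT ha hb hnorm)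
  have N2 : Summable fun k : ℤ => ‖gT c d k‖ :=
    summable_norm_iff.mpr (summable_gT hc hd (by rwa [← h]))
  have N1' : Summable fun k : ℤ => ‖gT (-a) (-b) k‖ :=
    summable_norm_iff.mpr (summable_gT (neg_ne_zero.2 ha) (neg_ne_zero.2 hb)
      (by rwa [neg_mul_neg]))
  have N2' : Summable fun k : ℤ => ‖gT (-c) (-d) k‖ :=
    summable_norm_iff.mpr (summable_gT (neg_ne_zero.2 hc) (neg_ne_zero.2 hd)
      (by rw [neg_mul_neg, ← h]; exact hnorm))
  have N3 : Summable fun k : ℤ => ‖gT (b / c) (a * c ^ 2 * d) k‖ :=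
    summable_norm_iff.mpr (summable_gT hbc hacd (by rw [h1]; exact hn2))
  have N4 : Summable fun k : ℤ => ‖gT (b / d) (a * c * d ^ 2) k‖ :=
    summable_norm_iff.mpr (summable_gT hbd hacd2 (by rw [h2]; exact hn2))
  have P1 : Summable fun p : ℤ × ℤ => gT a b p.1 * gT c d p.2 :=
    summable_mul_of_summable_norm N1 N2
  have P2 : Summable fun p : ℤ × ℤ => gT (-a) (-b) p.1 * gT (-c) (-d) p.2 :=
    summable_mul_of_summable_norm N1' N2'
  rw [fR_eq a b, fR_eq c d, fR_eq (-a) (-b), fR_eq (-c) (-d),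
    fR_eq (b / c) (a * c ^ 2 * d), fR_eq (b / d) (a * c * d ^ 2),
    tsum_mul_tsum_of_summable_norm N1 N2, tsum_mul_tsum_of_summable_norm N1' N2',
    ← Summable.tsum_sub P1 P2]
  set F : ℤ × ℤ → ℂ :=
    fun p => gT a b p.1 * gT c d p.2 - gT (-a) (-b) p.1 * gT (-c) (-d) p.2 with hF
  have hFeq : ∀ p : ℤ × ℤ, F p = (1 - (-1 : ℂ) ^ (p.1 + p.2)) * (gT a b p.1 * gT c d p.2) := by
    intro p
    rw [hF]
    simp only
    rw [gT_neg_neg ha hb, gT_neg_neg hc hd, zpow_add₀ (neg_ne_zero.2 (one_ne_zero (α := ℂ)))]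
    ring
  have heven : ∀ p : ℤ × ℤ, Even (p.1 + p.2) → F p = 0 := by
    intro p hp
    rw [hFeq p, Even.neg_one_zpow hp]
    ring
  have hodd : ∀ p : ℤ × ℤ, Odd (p.1 + p.2) → F p = 2 * (gT a b p.1 * gT c d p.2) := by
    intro p hp
    rw [hFeq p, Odd.neg_one_zpow hp]
    ring
  set i : ℤ × ℤ → ℤ × ℤ := fun q => (1 - q.1 - q.2, q.2 - q.1) with hi
  have hinj : Function.Injective i := by
    intro p q hpq
    simp only [hi, Prod.mk.injEq] at hpq
    have := Prod.ext_iff.mp (rfl : i p = i p)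
    rw [Prod.ext_iff]
    omega
  have hsupp : Function.support F ⊆ Set.range i := by
    intro p hp
    rcases Int.even_or_odd (p.1 + p.2) with hpar | hpar
    · exact absurd (heven p hpar) hp
    · obtain ⟨k, hk⟩ := hpar
      refine ⟨(-k, p.2 - k), ?_⟩
      simp only [hi, Prod.ext_iff]
      constructor <;> [omega; omega]
  have hre : ∑' p : ℤ × ℤ, F p = ∑' q : ℤ × ℤ, F (i q) := (hinj.tsum_eq hsupp).symm
  rw [hre]
  have hkey : ∀ q : ℤ × ℤ,
      F (i q) = 2 * a * (gT (b / c) (a * c ^ 2 * d) q.1 * gT (b / d) (a * c * d ^ 2) q.2) := by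
    intro q
    have hoddq : Odd ((1 - q.1 - q.2) + (q.2 - q.1)) := ⟨-q.1, by ring⟩
    have := hodd (i q) (by simpa [hi] using hoddq)
    rw [this]
    simp only [hi]
    rw [gT_key a b c d ha hb hc hd h q.1 q.2]
    ring
  calc ∑' q : ℤ × ℤ, F (i q)
      = ∑' q : ℤ × ℤ, 2 * a * (gT (b / c) (a * c ^ 2 * d) q.1 * gT (b / d) (a * c * d ^ 2) q.2) :=
        tsum_congr hkey
    _ = 2 * a * ∑' q : ℤ × ℤ, gT (b / c) (a * c ^ 2 * d) q.1 * gT (b / d) (a * c * d ^ 2) q.2 :=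
        tsum_mul_left
    _ = 2 * a * ((∑' k : ℤ, gT (b / c) (a * c ^ 2 * d) k) * ∑' k : ℤ, gT (b / d) (a * c * d ^ 2) k) := by
        rw [tsum_mul_tsum_of_summable_norm N3 N4]
    _ = 2 * a * (∑' k : ℤ, gT (b / c) (a * c ^ 2 * d) k) * ∑' k : ℤ, gT (b / d) (a * c * d ^ 2) k := by
        ring
end

section
/- As formal power series, f(−q,−q⁹)·f(−q³,−q⁷) = E₁E₁₀³/(E₂E₅), where f(a,b) := Σ_{k∈ℤ} a^{k(k+1)/2} b^{k(k−1)/2}. -/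
open PowerSeries Finset

/-- `E j = (q^j; q^j)_∞ = ∏_{k≥1} (1 - q^{jk})` as a formal power series over ℤ
(the coefficient of `q^N` is stable once `N+1` factors are taken). -/
noncomputable def E (j : ℕ) : PowerSeries ℤ :=
  PowerSeries.mk fun N => PowerSeries.coeff (R := ℤ) N
    (∏ k ∈ range (N + 1), ((1 : PowerSeries ℤ) - X ^ (j + j * k)))

/-- `f(c·q^a, d·q^b) = ∑_{k∈ℤ} c^{k(k+1)/2} d^{k(k-1)/2} q^{a·k(k+1)/2 + b·k(k-1)/2}`
as a formal power series over ℤ (for `c, d = ±1` and `a, b ≥ 1`; any `k` contributing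
to the coefficient of `q^N` satisfies `k² ≤ N`). -/
noncomputable def fPS (c d : ℤ) (a b : ℕ) : PowerSeries ℤ :=
  PowerSeries.mk fun N => ∑ k ∈ Finset.Icc (-(N : ℤ) - 1) ((N : ℤ) + 1),
    if (a : ℤ) * (k * (k + 1) / 2) + (b : ℤ) * (k * (k - 1) / 2) = (N : ℤ) then
      c ^ (k * (k + 1) / 2).toNat * d ^ (k * (k - 1) / 2).toNat
    else 0


section JTPaux
open Finset

/-- Gaussian binomial coefficient as a polynomial in `t = Polynomial.X`. -/
noncomputable def gauss : ℕ → ℕ → Polynomial ℤ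
  | _, 0 => 1
  | 0, _+1 => 0
  | m+1, r+1 => gauss m (r+1) + Polynomial.X^(m-r) * gauss m r

@[simp] lemma gauss_zero_right (m : ℕ) : gauss m 0 = 1 := by cases m <;> rfl

lemma gauss_succ_succ (m r : ℕ) :
    gauss (m+1) (r+1) = gauss m (r+1) + Polynomial.X^(m-r) * gauss m r := rfl

lemma gauss_eq_zero : ∀ {m r : ℕ}, m < r → gauss m r = 0
  | 0, _+1, _ => rfl
  | m+1, r+1, h => by
    rw [gauss_succ_succ, gauss_eq_zero (by omega : m < r+1), gauss_eq_zero (by omega : m < r)]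
    ring

@[simp] lemma gauss_self : ∀ m : ℕ, gauss m m = 1
  | 0 => rfl
  | m+1 => by
    rw [gauss_succ_succ, gauss_eq_zero (by omega : m < m+1), gauss_self m]
    simp

lemma gauss_one (m : ℕ) : gauss m 1 = ∑ i ∈ range m, Polynomial.X^i := by
  induction m with
  | zero => simp [gauss_eq_zero]
  | succ m ih => rw [gauss_succ_succ, ih, Finset.sum_range_succ]; simp [add_comm]

lemma gauss_one_mul (m : ℕ) : gauss m 1 * (1 - Polynomial.X) = 1 - Polynomial.X^m := by
  rw [gauss_one]
  induction m with
  | zero => simp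
  | succ m ih => rw [Finset.sum_range_succ, add_mul, ih]; ring

/-- the two "ratio" identities, proven jointly. -/
lemma gauss_CD (m : ℕ) :
    (∀ r d, m + 1 = r + d → (1 - Polynomial.X^(m+1)) * gauss m r = (1 - Polynomial.X^d) * gauss (m+1) r)
    ∧ (∀ s, (1 - Polynomial.X^(s+1)) * gauss (m+1) (s+1) = (1 - Polynomial.X^(m+1)) * gauss m s) := by
  induction m with
  | zero =>
    constructor
    · rintro r d h
      rcases r with _ | r
      · obtain rfl : d = 1 := by omega
        simp
      · obtain rfl : r = 0 := by omega
        obtain rfl : d = 0 := by omega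
        rw [gauss_eq_zero (by omega : 0 < 1)]
        simp
    · intro s
      cases s with
      | zero => simp [gauss_succ_succ]
      | succ s =>
        rw [gauss_eq_zero (show 1 < s + 1 + 1 by omega), gauss_eq_zero (show 0 < s + 1 by omega)]
        ring
  | succ m ih =>
    obtain ⟨C, D⟩ := ih
    have newC : ∀ r d, m + 2 = r + d → (1 - Polynomial.X^(m+2)) * gauss (m+1) r = (1 - Polynomial.X^d) * gauss (m+2) r := by
      rintro r d h
      cases r with
      | zero =>
        obtain rfl : d = m + 2 := by omega
        simp
      | succ s =>
        by_cases hs : s ≤ m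
        · obtain rfl : d = (m - s) + 1 := by omega
          have hD := D s
          have hC := C s ((m - s) + 1) (by omega)
          rw [gauss_succ_succ m s] at hD
          rw [gauss_succ_succ (m+1) s, gauss_succ_succ m s]
          rw [show m + 1 - s = (m - s) + 1 by omega]
          rw [show (Polynomial.X:Polynomial ℤ)^(m+2) = Polynomial.X^(m-s) * Polynomial.X^(s+2) by
            rw [← pow_add]; congr 1; omega] at *
          rw [show (Polynomial.X:Polynomial ℤ)^(m+1) = Polynomial.X^(m-s) * Polynomial.X^(s+1) by
            rw [← pow_add]; congr 1; omega] at *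
          linear_combination (Polynomial.X^(m-s) * Polynomial.X) * hD + (Polynomial.X^(m-s) * Polynomial.X) * hC
        · have h1 : m + 1 < s + 1 := by omega
          rw [gauss_eq_zero h1]
          rcases Nat.lt_or_ge (m+2) (s+1) with h2 | h2
          · rw [gauss_eq_zero h2]; ring
          · obtain rfl : s = m + 1 := by omega
            obtain rfl : d = 0 := by omega
            simp
    refine ⟨newC, ?_⟩
    intro s
    by_cases hs : s ≤ m + 1
    · rw [gauss_succ_succ (m+1) s]
      have hD' := D s
      have hC2 := C s (m + 1 - s) (by omega)
      have h4 : (Polynomial.X:Polynomial ℤ)^(m+1-s) * Polynomial.X^(s+1) = Polynomial.X^(m+2) := by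
        rw [← pow_add, show m+1-s+(s+1) = m+2 by omega]
      linear_combination hD' + hC2 - gauss (m+1) s * h4
    · rw [gauss_eq_zero (show m + 1 < s by omega), gauss_eq_zero (show m + 2 < s + 1 by omega)]
      ring

lemma gauss_pascal2 (m s : ℕ) :
    gauss (m+1) (s+1) = Polynomial.X^(s+1) * gauss m (s+1) + gauss m s := by
  by_cases hs : s ≤ m
  · have h1 : (1 - Polynomial.X^(m+1)) * (Polynomial.X^(s+1) * gauss m (s+1) + gauss m s)
        = (1 - Polynomial.X^(m+1)) * gauss (m+1) (s+1) := by
      have hD := (gauss_CD m).2 s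
      have hC := (gauss_CD m).1 (s+1) (m - s) (by omega)
      rw [show (Polynomial.X:Polynomial ℤ)^(m+1) = Polynomial.X^(s+1) * Polynomial.X^(m-s) by
        rw [← pow_add]; congr 1; omega] at hD hC ⊢
      linear_combination Polynomial.X^(s+1) * hC - hD
    have hne : (1 - Polynomial.X^(m+1) : Polynomial ℤ) ≠ 0 := fun h => by
      simpa using congrArg (Polynomial.eval 0) h
    exact (mul_left_cancel₀ hne h1).symm
  · rw [gauss_eq_zero (show m + 1 < s + 1 by omega), gauss_eq_zero (show m < s+1 by omega),
      gauss_eq_zero (show m < s by omega)]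
    ring

/-- the key three-term expansion (★) -/
lemma gauss_star (n j : ℕ) (hj : j ≤ 2*n) :
    gauss (2*n+2) (j+2) = Polynomial.X^(j+2) * gauss (2*n) (j+2) + (1 + Polynomial.X^(2*n+1)) * gauss (2*n) (j+1)
      + Polynomial.X^(2*n-j) * gauss (2*n) j := by
  have h1 : gauss (2*n+2) (j+2) = gauss (2*n+1) (j+2) + Polynomial.X^(2*n-j) * gauss (2*n+1) (j+1) := by
    rw [show 2*n - j = 2*n+1 - (j+1) by omega]
    exact gauss_succ_succ (2*n+1) (j+1)
  rw [h1, gauss_pascal2 (2*n) (j+1), gauss_pascal2 (2*n) j]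
  rw [show (Polynomial.X:Polynomial ℤ)^(2*n+1) = Polynomial.X^(2*n-j) * Polynomial.X^(j+1) by
    rw [← pow_add]; congr 1; omega]
  ring

lemma gauss_two_step (m : ℕ) : gauss (m+2) 1 = gauss m 1 + Polynomial.X^m + Polynomial.X^(m+1) := by
  have h1 : gauss (m+2) 1 = gauss (m+1) 1 + Polynomial.X^(m+1) := by
    simpa using gauss_succ_succ (m+1) 0
  have h2 : gauss (m+1) 1 = gauss m 1 + Polynomial.X^m := by
    simpa using gauss_succ_succ m 0
  rw [h1, h2]

noncomputable def poch (m : ℕ) : Polynomial ℤ := ∏ j ∈ range m, (1 - Polynomial.X^(j+1))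

lemma poch_succ (m : ℕ) : poch (m+1) = poch m * (1 - Polynomial.X^(m+1)) := Finset.prod_range_succ _ _

lemma gauss_mul_poch : ∀ m r d, m = r + d → gauss m r * (poch r * poch d) = poch m := by
  intro m
  induction m with
  | zero =>
    rintro r d h
    obtain rfl : r = 0 := by omega
    obtain rfl : d = 0 := by omega
    simp [poch]
  | succ m ih =>
    rintro r d h
    cases r with
    | zero => simp [poch, show d = m + 1 by omega]
    | succ s =>
      cases d with
      | zero =>
        rw [show s + 1 = m + 1 by omega, gauss_self]
        simp [poch]
      | succ e =>
        have h1 := ih (s+1) e (by omega)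
        have h2 := ih s (e+1) (by omega)
        rw [gauss_succ_succ, poch_succ s, poch_succ e, poch_succ m]
        rw [poch_succ s] at h1
        rw [poch_succ e] at h2
        have h3 : m - s = e + 1 := by omega
        rw [h3]
        have h4 : (Polynomial.X:Polynomial ℤ)^(e+1) * Polynomial.X^(s+1) = Polynomial.X^(m+1) := by
          rw [← pow_add, show e+1+(s+1) = m+1 by omega]
        linear_combination (1 - Polynomial.X^(e+1)) * h1 + Polynomial.X^(e+1) * (1 - Polynomial.X^(s+1)) * h2 - poch m * h4

end JTPaux

section JTPaux2
open Finset

def tpZ (k : ℤ) : ℕ := (k*(k+1)/2).toNat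
def tmZ (k : ℤ) : ℕ := (k*(k-1)/2).toNat
def eps (A B n r : ℕ) : ℕ := A * tpZ ((r:ℤ)-n) + B * tmZ ((r:ℤ)-n)

lemma tri_nonneg (k : ℤ) : 0 ≤ k*(k+1)/2 := by
  apply Int.ediv_nonneg _ (by norm_num)
  rcases le_or_gt 0 k with h | h
  · positivity
  · have h2 : 0 ≤ (-k) * (-(k+1)) := mul_nonneg (by omega) (by omega)
    nlinarith [h2]

lemma tri_nonneg' (k : ℤ) : 0 ≤ k*(k-1)/2 := by
  have := tri_nonneg (k-1)
  have e : (k-1)*(k-1+1) = k*(k-1) := by ring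
  rwa [e] at this

lemma tpZ_cast (k : ℤ) : ((tpZ k : ℕ) : ℤ) = k*(k+1)/2 := Int.toNat_of_nonneg (tri_nonneg k)
lemma tmZ_cast (k : ℤ) : ((tmZ k : ℕ) : ℤ) = k*(k-1)/2 := Int.toNat_of_nonneg (tri_nonneg' k)

lemma half_p (x : ℤ) : 2 * (x*(x+1)/2) = x*(x+1) :=
  Int.mul_ediv_cancel' ((Int.even_mul_succ_self x).two_dvd)

lemma half_m (x : ℤ) : 2 * (x*(x-1)/2) = x*(x-1) := by
  have h : Even (x*(x-1)) := by
    have := Int.even_mul_succ_self (x-1)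
    have e : (x-1)*(x-1+1) = x*(x-1) := by ring
    rwa [e] at this
  exact Int.mul_ediv_cancel' (h.two_dvd)

lemma eps_cast (A B n r : ℕ) : ((eps A B n r : ℕ) : ℤ)
    = (A:ℤ) * (((r:ℤ)-n)*(((r:ℤ)-n)+1)/2) + (B:ℤ) * (((r:ℤ)-n)*(((r:ℤ)-n)-1)/2) := by
  unfold eps
  push_cast [tpZ_cast, tmZ_cast]
  ring_nf

/-- (i) diagonal shift -/
lemma eps_shift (A B n r : ℕ) : eps A B (n+1) (r+1) = eps A B n r := by
  unfold eps
  have h : ((r:ℤ)+1) - ((n:ℤ)+1) = (r:ℤ) - n := by ring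
  push_cast [h]
  rfl

/-- (ii) -/
lemma eps_ii (A B n r : ℕ) :
    eps A B (n+1) r + (A+B)*r = eps A B n r + (B + (A+B)*n) := by
  have key : ((eps A B (n+1) r + (A+B)*r : ℕ) : ℤ) = ((eps A B n r + (B + (A+B)*n) : ℕ) : ℤ) := by
    push_cast [eps_cast]
    apply mul_left_cancel₀ (two_ne_zero : (2:ℤ) ≠ 0)
    linear_combination (A:ℤ) * half_p ((r:ℤ) - ((n:ℤ)+1)) + (B:ℤ) * half_m ((r:ℤ) - ((n:ℤ)+1))
      - (A:ℤ) * half_p ((r:ℤ) - n) - (B:ℤ) * half_m ((r:ℤ) - n)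
  exact_mod_cast key

/-- (iii) -/
lemma eps_iii (A B n j : ℕ) (hj : j ≤ 2*n) :
    eps A B (n+1) (j+2) + (A+B)*(2*n-j) = eps A B n j + (A + (A+B)*n) := by
  have key : ((eps A B (n+1) (j+2) + (A+B)*(2*n-j) : ℕ) : ℤ)
      = ((eps A B n j + (A + (A+B)*n) : ℕ) : ℤ) := by
    push_cast [eps_cast]
    rw [Nat.cast_sub hj]
    push_cast
    apply mul_left_cancel₀ (two_ne_zero : (2:ℤ) ≠ 0)
    linear_combination (A:ℤ) * half_p (((j:ℤ)+2) - ((n:ℤ)+1)) + (B:ℤ) * half_m (((j:ℤ)+2) - ((n:ℤ)+1))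
      - (A:ℤ) * half_p ((j:ℤ) - n) - (B:ℤ) * half_m ((j:ℤ) - n)
  exact_mod_cast key

/-- (iv) -/
lemma eps_iv (A B n : ℕ) :
    eps A B n 1 + (B + (A+B)*n) = eps A B n 0 + (A+B) := by
  have key : ((eps A B n 1 + (B + (A+B)*n) : ℕ) : ℤ) = ((eps A B n 0 + (A+B) : ℕ) : ℤ) := by
    push_cast [eps_cast]
    apply mul_left_cancel₀ (two_ne_zero : (2:ℤ) ≠ 0)
    linear_combination (A:ℤ) * half_p ((1:ℤ) - n) + (B:ℤ) * half_m ((1:ℤ) - n)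
      - (A:ℤ) * half_p ((0:ℤ) - n) - (B:ℤ) * half_m ((0:ℤ) - n)
  exact_mod_cast key

/-- `k² ≤ eZ k` when `A,B ≥ 1` -/
lemma sq_le_eps (A B n r : ℕ) (hA : 1 ≤ A) (hB : 1 ≤ B) :
    (((r:ℤ) - n).natAbs)^2 ≤ eps A B n r := by
  have key : ((((r:ℤ) - n).natAbs : ℤ))^2 ≤ ((eps A B n r : ℕ) : ℤ) := by
    rw [eps_cast]
    have h1 := tri_nonneg ((r:ℤ) - n)
    have h2 := tri_nonneg' ((r:ℤ) - n)
    have hp := half_p ((r:ℤ) - n)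
    have hm := half_m ((r:ℤ) - n)
    have hA' : (1:ℤ) ≤ A := by exact_mod_cast hA
    have hB' : (1:ℤ) ≤ B := by exact_mod_cast hB
    have habs : ((((r:ℤ) - n).natAbs : ℤ))^2 = ((r:ℤ)-n)^2 := Int.natAbs_sq _
    nlinarith [h1, h2, hp, hm]
  exact_mod_cast key

lemma eps_zero (A B : ℕ) : eps A B 0 0 = 0 := by
  simp [eps, tpZ, tmZ]
end JTPaux2

section JTPmain
open Finset



open PowerSeries

noncomputable def ev (S : ℕ) : Polynomial ℤ →+* PowerSeries ℤ :=
  Polynomial.eval₂RingHom (PowerSeries.C (R := ℤ)) ((PowerSeries.X : PowerSeries ℤ) ^ S)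

@[simp] lemma ev_X (S : ℕ) : ev S Polynomial.X = (X : PowerSeries ℤ)^S := by
  simp [ev]

@[simp] lemma ev_X_pow (S a : ℕ) : ev S (Polynomial.X ^ a) = (X : PowerSeries ℤ)^(S*a) := by
  rw [map_pow, ev_X, ← pow_mul]

noncomputable def trm (A B n r : ℕ) : PowerSeries ℤ :=
  ((-1 : PowerSeries ℤ))^(n+r) * X^(eps A B n r) * ev (A+B) (gauss (2*n) r)

noncomputable def psi (A B n : ℕ) : PowerSeries ℤ := ∑ r ∈ range (2*n+1), trm A B n r

noncomputable def phi (A B n : ℕ) : PowerSeries ℤ :=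
  ∏ j ∈ range n, ((1 - X^(A+(A+B)*j)) * (1 - X^(B+(A+B)*j)))

lemma trm_eq_zero (A B n r : ℕ) (h : 2*n < r) : trm A B n r = 0 := by
  rw [trm, gauss_eq_zero h, map_zero, mul_zero]

lemma mono_shuffle (G s : PowerSeries ℤ) (p q u v : ℕ) (h : p + q = u + v) :
    s * X^p * (X^q * G) = s * X^u * G * X^v := by
  have h1 : s * X^p * (X^q * G) = s * X^(p+q) * G := by rw [pow_add]; ring
  have h2 : s * X^u * G * X^v = s * X^(u+v) * G := by rw [pow_add]; ring
  rw [h1, h2, h]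

lemma psi_succ (A B n : ℕ) :
    psi A B (n+1) = psi A B n * ((1 - X^(A+(A+B)*n)) * (1 - X^(B+(A+B)*n))) := by
  have hsplit : psi A B (n+1)
      = (∑ j ∈ range (2*n+1), trm A B (n+1) (j+2)) + trm A B (n+1) 1 + trm A B (n+1) 0 := by
    rw [psi, show 2*(n+1)+1 = (2*n+1)+1+1 by ring, Finset.sum_range_succ',
      Finset.sum_range_succ']
  have hstar : ∀ j ∈ range (2*n+1), trm A B (n+1) (j+2) =
      -(trm A B n (j+2) * X^(B+(A+B)*n))
      + trm A B n (j+1) * (1 + X^((A+B)*(2*n+1)))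
      + -(trm A B n j * X^(A+(A+B)*n)) := by
    intro j hj
    have hj' : j ≤ 2*n := by
      have := Finset.mem_range.mp hj; omega
    rw [trm, show 2*(n+1) = 2*n+2 by ring, gauss_star n j hj']
    rw [map_add, map_add, map_mul, map_mul, map_mul, ev_X_pow, ev_X_pow, map_add, map_one,
      ev_X_pow]
    rw [mul_add, mul_add]
    congr 1
    · congr 1
      · -- piece a
        have hsg : ((-1 : PowerSeries ℤ))^((n+1)+(j+2)) = -((-1 : PowerSeries ℤ))^(n+(j+2)) := by
          rw [show (n+1)+(j+2) = (n+(j+2))+1 by ring, pow_succ]; ring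
        rw [hsg, trm, neg_mul, neg_mul, neg_inj]
        exact mono_shuffle _ _ _ _ _ _ (eps_ii A B n (j+2))
      · -- piece b
        have hsg : ((-1 : PowerSeries ℤ))^((n+1)+(j+2)) = ((-1 : PowerSeries ℤ))^(n+(j+1)) := by
          rw [show (n+1)+(j+2) = (n+(j+1))+2 by ring, pow_add]; ring
        rw [hsg, trm, eps_shift A B n (j+1)]
        ring
    · -- piece d
      have hsg : ((-1 : PowerSeries ℤ))^((n+1)+(j+2)) = -((-1 : PowerSeries ℤ))^(n+j) := by
        rw [show (n+1)+(j+2) = (n+j)+3 by ring, pow_add]; ring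
      rw [hsg, trm, neg_mul, neg_mul, neg_inj]
      exact mono_shuffle _ _ _ _ _ _ (by
        have := eps_iii A B n j hj'
        omega)
  rw [hsplit, Finset.sum_congr rfl hstar]
  rw [Finset.sum_add_distrib, Finset.sum_add_distrib, Finset.sum_neg_distrib,
    Finset.sum_neg_distrib, ← Finset.sum_mul, ← Finset.sum_mul, ← Finset.sum_mul]
  -- reindexing identities
  have hfull : ∑ r ∈ range (2*n+1+1+1), trm A B n r = psi A B n := by
    rw [Finset.sum_range_succ, Finset.sum_range_succ,
      trm_eq_zero A B n (2*n+1) (by omega), trm_eq_zero A B n (2*n+1+1) (by omega), psi]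
    ring
  have hA2 : ∑ j ∈ range (2*n+1), trm A B n (j+2)
      = psi A B n - trm A B n 0 - trm A B n 1 := by
    have h1 : ∑ r ∈ range (2*n+1+1+1), trm A B n r
        = (∑ j ∈ range (2*n+1), trm A B n (j+2)) + trm A B n 1 + trm A B n 0 := by
      rw [Finset.sum_range_succ', Finset.sum_range_succ']
    rw [hfull] at h1
    linear_combination -h1
  have hB2 : ∑ j ∈ range (2*n+1), trm A B n (j+1) = psi A B n - trm A B n 0 := by
    have h0 : ∑ r ∈ range (2*n+1+1), trm A B n r = psi A B n := by
      rw [Finset.sum_range_succ, trm_eq_zero A B n (2*n+1) (by omega), psi]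
      ring
    have h1 : ∑ r ∈ range (2*n+1+1), trm A B n r
        = (∑ j ∈ range (2*n+1), trm A B n (j+1)) + trm A B n 0 := by
      rw [Finset.sum_range_succ']
    rw [h0] at h1
    linear_combination -h1
  rw [hA2, hB2]
  -- boundary expansions
  have ht0 : trm A B n 0 = ((-1:PowerSeries ℤ))^n * X^(eps A B n 0) := by
    rw [trm, gauss_zero_right, map_one, mul_one, Nat.add_zero]
  have ht1 : trm A B n 1 = -(((-1:PowerSeries ℤ))^n * X^(eps A B n 1) * ev (A+B) (gauss (2*n) 1)) := by
    rw [trm, pow_succ]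
    ring
  have hT0 : trm A B (n+1) 0 = -(((-1:PowerSeries ℤ))^n * X^(eps A B (n+1) 0)) := by
    rw [trm, show 2*(n+1) = 2*n+2 by ring]
    rw [gauss_zero_right, map_one, mul_one, Nat.add_zero, pow_succ]
    ring
  have hT1 : trm A B (n+1) 1 = ((-1:PowerSeries ℤ))^n * X^(eps A B n 0) *
      (ev (A+B) (gauss (2*n) 1) + X^((A+B)*(2*n)) + X^((A+B)*(2*n+1))) := by
    rw [trm, show 2*(n+1) = 2*n+2 by ring, gauss_two_step, map_add, map_add, ev_X_pow, ev_X_pow,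
      eps_shift A B n 0, show (n+1)+1 = n+2 by ring, pow_add]
    ring
  have hgeo : ev (A+B) (gauss (2*n) 1) * (1 - X^(A+B)) = 1 - X^((A+B)*(2*n)) := by
    have h := congrArg (ev (A+B)) (gauss_one_mul (2*n))
    rw [map_mul, map_sub, map_one, map_sub, map_one, ev_X_pow] at h
    simpa using h
  have hab : (X:PowerSeries ℤ)^(A+(A+B)*n) * X^(B+(A+B)*n) = X^((A+B)*(2*n+1)) := by
    rw [← pow_add]
    congr 1
    ring
  have hiv : (X:PowerSeries ℤ)^(eps A B n 1) * X^(B+(A+B)*n) = X^(eps A B n 0) * X^(A+B) := by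
    rw [← pow_add, ← pow_add, eps_iv A B n]
  have hii0 : (X:PowerSeries ℤ)^(eps A B (n+1) 0) = X^(eps A B n 0) * X^(B+(A+B)*n) := by
    rw [← pow_add]
    congr 1
    have := eps_ii A B n 0
    omega
  rw [show ∑ j ∈ range (2*n+1), trm A B n j = psi A B n from rfl]
  rw [ht0, ht1, hT0, hT1]
  linear_combination (-(psi A B n)) * hab + ((-1:PowerSeries ℤ))^n * X^(eps A B n 0) * hgeo
    - ((-1:PowerSeries ℤ))^n * (ev (A+B) (gauss (2*n) 1)) * hiv
    - ((-1:PowerSeries ℤ))^n * hii0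

lemma jtp_fin (A B n : ℕ) : phi A B n = psi A B n := by
  induction n with
  | zero => simp [phi, psi, trm, gauss_zero_right, eps_zero]
  | succ n ih => rw [phi, Finset.prod_range_succ, ← phi, ih, psi_succ]

end JTPmain

section Cong
open PowerSeries Finset

lemma dvd_sub_mul' {m : ℕ} {f f' g g' : PowerSeries ℤ}
    (hf : X^m ∣ f - f') (hg : X^m ∣ g - g') : X^m ∣ f*g - f'*g' := by
  have h : f*g - f'*g' = (f - f')*g + f'*(g - g') := by ring
  rw [h]
  exact dvd_add (hf.mul_right g) (hg.mul_left f')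

lemma coeff_eq_of_dvd {m : ℕ} {f g : PowerSeries ℤ} (h : X^m ∣ f - g) {i : ℕ} (hi : i < m) :
    coeff i f = coeff i g := by
  have h2 := (X_pow_dvd_iff.mp h) i hi
  rw [map_sub, sub_eq_zero] at h2
  exact h2

lemma prod_cong (v : ℕ → ℕ) (hv : ∀ k, k < v k) (m M M' : ℕ) (h1 : m ≤ M) (h2 : M ≤ M') :
    X^m ∣ (∏ k ∈ range M', ((1:PowerSeries ℤ) - X^(v k))) - ∏ k ∈ range M, ((1:PowerSeries ℤ) - X^(v k)) := by
  induction M', h2 using Nat.le_induction with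
  | base => simp
  | succ M' hMM ih =>
    rw [Finset.prod_range_succ]
    have h3 : X^m ∣ ((1:PowerSeries ℤ) - X^(v M')) - 1 := by
      have h4 : ((1:PowerSeries ℤ) - X^(v M')) - 1 = -(X^(v M')) := by ring
      rw [h4, dvd_neg]
      exact pow_dvd_pow X (by have := hv M'; omega)
    have := dvd_sub_mul' ih h3
    simpa using this

lemma cancel_of_unit {h x y : PowerSeries ℤ} (hu : IsUnit h) {m : ℕ}
    (hd : X^m ∣ h*x - h*y) : X^m ∣ x - y := by
  obtain ⟨u, rfl⟩ := hu
  have h2 : x - y = (↑u⁻¹ : PowerSeries ℤ) * ((↑u:PowerSeries ℤ)*x - ↑u*y) := by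
    rw [mul_sub, ← mul_assoc, ← mul_assoc, Units.inv_mul, one_mul, one_mul]
  rw [h2]
  exact hd.mul_left _

lemma constCoeff_prod_one_sub (v : ℕ → ℕ) (hv : ∀ k, 1 ≤ v k) (M : ℕ) :
    constantCoeff (∏ k ∈ range M, ((1:PowerSeries ℤ) - X^(v k))) = 1 := by
  rw [map_prod]
  apply Finset.prod_eq_one
  intro k _
  rw [map_sub, map_one, map_pow, constantCoeff_X, zero_pow (by have := hv k; omega), sub_zero]

lemma ev_poch (S M : ℕ) : ev S (poch M) = ∏ j ∈ range M, ((1:PowerSeries ℤ) - X^(S*(j+1))) := by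
  rw [poch, map_prod]
  apply Finset.prod_congr rfl
  intro j _
  rw [map_sub, map_one, ev_X_pow]

lemma poch_cong (S : ℕ) (hS : 1 ≤ S) (m M M' : ℕ) (h1 : m ≤ M) (h2 : M ≤ M') :
    X^m ∣ ev S (poch M') - ev S (poch M) := by
  rw [ev_poch, ev_poch]
  exact prod_cong _ (fun k => by nlinarith) m M M' h1 h2

lemma gauss_poch_cong (S : ℕ) (hS : 1 ≤ S) (N n r : ℕ)
    (h1 : N+1 ≤ r) (h2 : r + (N+1) ≤ 2*n) (h3 : N+1 ≤ n) :
    X^(N+1) ∣ ev S (gauss (2*n) r) * ev S (poch n) - 1 := by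
  set K := ev S (poch (N+1)) with hK
  set g := ev S (gauss (2*n) r) with hg
  have hKu : IsUnit K := by
    rw [isUnit_iff_constantCoeff, hK, ev_poch]
    rw [constCoeff_prod_one_sub _ (fun k => by nlinarith) (N+1)]
    exact isUnit_one
  have hprod : g * (ev S (poch r) * ev S (poch (2*n - r))) = ev S (poch (2*n)) := by
    rw [hg, ← map_mul, ← map_mul]
    exact congrArg (ev S) (gauss_mul_poch (2*n) r (2*n - r) (by omega))
  have c1 : X^(N+1) ∣ ev S (poch r) - K := poch_cong S hS (N+1) (N+1) r le_rfl h1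
  have c2 : X^(N+1) ∣ ev S (poch (2*n - r)) - K := poch_cong S hS (N+1) (N+1) _ le_rfl (by omega)
  have c3 : X^(N+1) ∣ ev S (poch (2*n)) - K := poch_cong S hS (N+1) (N+1) _ le_rfl (by omega)
  have c4 : X^(N+1) ∣ ev S (poch n) - K := poch_cong S hS (N+1) (N+1) _ le_rfl h3
  have step1 : X^(N+1) ∣ g * (ev S (poch r) * ev S (poch (2*n - r))) - g * (K * K) :=
    dvd_sub_mul' (by simp) (dvd_sub_mul' c1 c2)
  rw [hprod] at step1
  -- X^(N+1) ∣ K - g*K*K  (combining with c3)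
  have step2 : X^(N+1) ∣ K * 1 - K * (g * K) := by
    have h5 : K * 1 - K * (g * K) = (ev S (poch (2*n)) - g * (K*K)) - (ev S (poch (2*n)) - K) := by
      ring
    rw [h5]
    exact dvd_sub step1 c3
  have step3 : X^(N+1) ∣ (1:PowerSeries ℤ) - g * K := cancel_of_unit hKu step2
  have step4 : X^(N+1) ∣ g * ev S (poch n) - 1 := by
    have h6 : g * ev S (poch n) - 1 = g * (ev S (poch n) - K) - (1 - g * K) := by ring
    rw [h6]
    exact dvd_sub (c4.mul_left g) step3
  exact step4

end Cong

section Limit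
open PowerSeries Finset

lemma coeff_X_pow_mul_le {e i : ℕ} (h : e ≤ i) (f : PowerSeries ℤ) :
    coeff i (X^e * f) = coeff (i - e) f := by
  conv_lhs => rw [show i = (i-e)+e by omega]
  exact coeff_X_pow_mul f e (i-e)

lemma coeff_trm_poch (A B : ℕ) (hA : 1 ≤ A) (hB : 1 ≤ B) (N i : ℕ) (hi : i ≤ N) (r : ℕ) :
    coeff i (trm A B (2*N+2) r * ev (A+B) (poch (2*N+2)))
      = if eps A B (2*N+2) r = i then ((-1:ℤ))^((2*N+2)+r) else 0 := by
  set n := 2*N+2 with hn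
  by_cases he : eps A B n r ≤ i
  · have hk2 : (((r:ℤ) - n).natAbs)^2 ≤ N := le_trans (sq_le_eps A B n r hA hB) (le_trans he hi)
    have hkN : ((r:ℤ) - n).natAbs ≤ N := le_trans (Nat.le_self_pow two_ne_zero _) hk2
    have hb1 : N+1 ≤ r := by omega
    have hb2 : r + (N+1) ≤ 2*n := by omega
    have hcong := gauss_poch_cong (A+B) (by omega) N n r hb1 hb2 (by omega)
    rw [trm]
    have hC : ((-1 : PowerSeries ℤ))^(n+r) = PowerSeries.C (R := ℤ) ((-1)^(n+r)) := by
      rw [map_pow, map_neg, map_one]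
    have hre : ((-1 : PowerSeries ℤ))^(n+r) * X^(eps A B n r) * ev (A+B) (gauss (2*n) r) * ev (A+B) (poch n)
        = PowerSeries.C (R := ℤ) ((-1)^(n+r)) * (X^(eps A B n r)
            * (ev (A+B) (gauss (2*n) r) * ev (A+B) (poch n))) := by
      rw [hC]; ring
    rw [hre, coeff_C_mul, coeff_X_pow_mul_le he]
    rw [coeff_eq_of_dvd hcong (show i - eps A B n r < N+1 by omega)]
    rw [PowerSeries.coeff_one]
    by_cases heq : eps A B n r = i
    · rw [if_pos (by omega), if_pos heq, mul_one]
    · rw [if_neg (by omega), if_neg heq, mul_zero]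
  · have hdvd : X^(i+1) ∣ trm A B n r * ev (A+B) (poch n) := by
      apply Dvd.dvd.trans (pow_dvd_pow X (show i+1 ≤ eps A B n r by omega))
      rw [trm]
      exact ⟨(-1)^(n+r) * ev (A+B) (gauss (2*n) r) * ev (A+B) (poch n), by ring⟩
    rw [(X_pow_dvd_iff.mp hdvd) i (by omega), if_neg (by omega)]

lemma tpZ_add_tmZ (k : ℤ) : tpZ k + tmZ k = (k.natAbs)^2 := by
  have key : ((tpZ k + tmZ k : ℕ) : ℤ) = (((k.natAbs)^2 : ℕ) : ℤ) := by
    push_cast [tpZ_cast, tmZ_cast]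
    rw [sq_abs]
    apply mul_left_cancel₀ (two_ne_zero : (2:ℤ) ≠ 0)
    linear_combination half_p k + half_m k
  exact_mod_cast key

lemma neg_one_pow_tp_tm (n r : ℕ) : ((-1:ℤ))^(tpZ ((r:ℤ)-n) + tmZ ((r:ℤ)-n)) = (-1)^(n+r) := by
  rw [tpZ_add_tmZ]
  have h1 : Even ((((r:ℤ)-n).natAbs)^2) ↔ Even (((r:ℤ)-n).natAbs) := by
    simp [Nat.even_pow]
  have h2 : Even (((r:ℤ)-n).natAbs) ↔ Even ((r:ℤ)-(n:ℤ)) := Int.natAbs_even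
  have h3 : Even ((r:ℤ)-(n:ℤ)) ↔ Even (n+r) := by
    rw [Int.even_sub, Nat.even_add]
    simp only [Int.even_coe_nat]
    tauto
  have hpar : Even ((((r:ℤ)-n).natAbs)^2) ↔ Even (n+r) := h1.trans (h2.trans h3)
  rcases Nat.even_or_odd (n+r) with h | h
  · rw [h.neg_one_pow, (hpar.mpr h).neg_one_pow]
  · have : ¬ Even ((((r:ℤ)-n).natAbs)^2) := fun hc => (Nat.not_even_iff_odd.mpr h) (hpar.mp hc)
    rw [(Nat.not_even_iff_odd.mp this).neg_one_pow, h.neg_one_pow]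

lemma f_cong (A B : ℕ) (hA : 1 ≤ A) (hB : 1 ≤ B) (N : ℕ) :
    X^(N+1) ∣ fPS (-1) (-1) A B - phi A B (2*N+2) * ev (A+B) (poch (2*N+2)) := by
  rw [X_pow_dvd_iff]
  intro i hi
  have hi' : i ≤ N := by omega
  rw [map_sub, sub_eq_zero]
  set n := 2*N+2 with hn
  rw [jtp_fin A B n, psi, Finset.sum_mul, map_sum]
  rw [Finset.sum_congr rfl (fun r _ => coeff_trm_poch A B hA hB N i hi' r)]
  rw [fPS, coeff_mk]
  -- extend the Icc sum
  rw [Finset.sum_subset (show Finset.Icc (-(i:ℤ)-1) ((i:ℤ)+1) ⊆ Finset.Icc (-(n:ℤ)) (n:ℤ) by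
      intro k hk
      simp only [Finset.mem_Icc] at *
      omega)
    (by
      intro k hk hk2
      simp only [Finset.mem_Icc] at hk hk2
      rw [if_neg]
      intro hcond
      have h1 := half_p k
      have h2 := half_m k
      have h3 := tri_nonneg k
      have h4 := tri_nonneg' k
      have hA' : (1:ℤ) ≤ A := by exact_mod_cast hA
      have hB' : (1:ℤ) ≤ B := by exact_mod_cast hB
      have hksq : k^2 ≤ (i:ℤ) := by nlinarith
      have : (i:ℤ)+2 ≤ k ∨ k ≤ -(i:ℤ)-2 := by omega
      rcases this with h | h <;> nlinarith)]
  -- now reindex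
  refine Finset.sum_nbij' (fun (k:ℤ) => (k + n).toNat) (fun r => (r:ℤ) - n) ?_ ?_ ?_ ?_ ?_
  · intro k hk
    simp only [Finset.mem_Icc] at hk
    simp only [Finset.mem_range]
    omega
  · intro r hr
    simp only [Finset.mem_range] at hr
    simp only [Finset.mem_Icc]
    omega
  · intro k hk
    simp only [Finset.mem_Icc] at hk
    show ((((k + (n:ℤ)).toNat : ℕ)):ℤ) - (n:ℤ) = k
    omega
  · intro r hr
    simp only [Finset.mem_range] at hr
    show (((r:ℤ) - (n:ℤ)) + (n:ℤ)).toNat = r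
    omega
  · intro k hk
    beta_reduce
    simp only [Finset.mem_Icc] at hk
    have hcast : (((k + n).toNat : ℤ)) = k + n := Int.toNat_of_nonneg (by omega)
    have hkk : ((((k+n).toNat : ℕ)):ℤ) - (n:ℤ) = k := by omega
    have hcond : ((A:ℤ) * (k * (k + 1) / 2) + (B:ℤ) * (k * (k - 1) / 2) = (i:ℤ))
        ↔ eps A B n ((k+n).toNat) = i := by
      rw [show ((eps A B n ((k+n).toNat) : ℕ) = i) ↔ (((eps A B n ((k+n).toNat):ℕ)):ℤ) = (i:ℤ) from
        ⟨fun h => by exact_mod_cast h, fun h => by exact_mod_cast h⟩]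
      rw [eps_cast, hkk]
    by_cases hc : (A:ℤ) * (k * (k + 1) / 2) + (B:ℤ) * (k * (k - 1) / 2) = (i:ℤ)
    · rw [if_pos hc, if_pos (hcond.mp hc)]
      have : ((-1:ℤ)) ^ (k * (k + 1) / 2).toNat * (-1) ^ (k * (k - 1) / 2).toNat
          = (-1:ℤ)^(tpZ k + tmZ k) := by
        rw [pow_add]; rfl
      rw [this]
      have hfin := neg_one_pow_tp_tm n ((k+n).toNat)
      rw [hkk] at hfin
      exact hfin
    · rw [if_neg hc, if_neg (fun h => hc (hcond.mpr h))]

end Limit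

section Final
open PowerSeries Finset

lemma E_cong (j : ℕ) (hj : 1 ≤ j) (N M : ℕ) (hM : N+1 ≤ M) :
    X^(N+1) ∣ E j - ∏ k ∈ range M, ((1:PowerSeries ℤ) - X^(j + j*k)) := by
  rw [X_pow_dvd_iff]
  intro i hi
  rw [map_sub, sub_eq_zero, E, coeff_mk]
  have hv : ∀ k, k < j + j*k := fun k => by nlinarith
  exact (coeff_eq_of_dvd (prod_cong _ hv (i+1) (i+1) M le_rfl (by omega)) (by omega)).symm

lemma P10_eq (n : ℕ) :
    (∏ k ∈ range n, ((1:PowerSeries ℤ) - X^(10 + 10*k))) = ev 10 (poch n) := by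
  rw [ev_poch]
  exact Finset.prod_congr rfl (fun j _ => by rw [show 10*(j+1) = 10 + 10*j by ring])

lemma FID (n : ℕ) :
    ((∏ k ∈ range (5*n), ((1:PowerSeries ℤ) - X^(2 + 2*k)))
        * (∏ k ∈ range (2*n), ((1:PowerSeries ℤ) - X^(5 + 5*k)))) *
      ((phi 1 9 n * ev 10 (poch n)) * (phi 3 7 n * ev 10 (poch n)))
    = (∏ k ∈ range (10*n), ((1:PowerSeries ℤ) - X^(1 + 1*k))) * (ev 10 (poch n))^3 := by
  induction n with
  | zero => simp [phi, poch]
  | succ n ih =>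
    have hphi19 : phi 1 9 (n+1)
        = phi 1 9 n * ((1 - X^(1+(1+9)*n)) * (1 - X^(9+(1+9)*n))) := by
      rw [phi, Finset.prod_range_succ, ← phi]
    have hphi37 : phi 3 7 (n+1)
        = phi 3 7 n * ((1 - X^(3+(3+7)*n)) * (1 - X^(7+(3+7)*n))) := by
      rw [phi, Finset.prod_range_succ, ← phi]
    have hpoch' : ev 10 (poch (n+1)) = ev 10 (poch n) * (1 - X^(10*(n+1))) := by
      rw [poch_succ, map_mul, map_sub, map_one, ev_X_pow]
    rw [hphi19, hphi37, hpoch']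
    rw [show 5*(n+1) = 5*n + 5 by ring, show 2*(n+1) = 2*n+2 by ring,
      show 10*(n+1) = 10*n+10 by ring,
      Finset.prod_range_add _ (5*n) 5, Finset.prod_range_add _ (2*n) 2,
      Finset.prod_range_add _ (10*n) 10]
    rw [show (∏ x ∈ range 5, ((1:PowerSeries ℤ) - X ^ (2 + 2 * (5*n + x))))
        = (1 - X^(2+2*(5*n+0))) * (1 - X^(2+2*(5*n+1))) * (1 - X^(2+2*(5*n+2)))
          * (1 - X^(2+2*(5*n+3))) * (1 - X^(2+2*(5*n+4))) by
      simp [Finset.prod_range_succ, mul_assoc]]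
    rw [show (∏ x ∈ range 2, ((1:PowerSeries ℤ) - X ^ (5 + 5 * (2*n + x))))
        = (1 - X^(5+5*(2*n+0))) * (1 - X^(5+5*(2*n+1))) by
      simp [Finset.prod_range_succ, mul_assoc]]
    rw [show (∏ x ∈ range 10, ((1:PowerSeries ℤ) - X ^ (1 + 1 * (10*n + x))))
        = (1 - X^(1+1*(10*n+0))) * (1 - X^(1+1*(10*n+1))) * (1 - X^(1+1*(10*n+2)))
          * (1 - X^(1+1*(10*n+3))) * (1 - X^(1+1*(10*n+4))) * (1 - X^(1+1*(10*n+5)))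
          * (1 - X^(1+1*(10*n+6))) * (1 - X^(1+1*(10*n+7))) * (1 - X^(1+1*(10*n+8)))
          * (1 - X^(1+1*(10*n+9))) by
      simp [Finset.prod_range_succ, mul_assoc]]
    linear_combination ((1 - X^(2+2*(5*n+0))) * (1 - X^(2+2*(5*n+1))) * (1 - X^(2+2*(5*n+2)))
          * ((1:PowerSeries ℤ) - X^(2+2*(5*n+3))) * (1 - X^(2+2*(5*n+4)))
        * ((1 - X^(5+5*(2*n+0))) * (1 - X^(5+5*(2*n+1))))
        * ((1 - X^(1+(1+9)*n)) * (1 - X^(9+(1+9)*n)) * (1 - X^(10*(n+1)))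
          * (1 - X^(3+(3+7)*n)) * (1 - X^(7+(3+7)*n)) * (1 - X^(10*(n+1))))) * ih

end Final

section Assembly
open PowerSeries Finset

lemma constCoeff_E (j : ℕ) (hj : 1 ≤ j) : constantCoeff (E j) = 1 := by
  rw [← coeff_zero_eq_constantCoeff_apply, E, coeff_mk, coeff_zero_eq_constantCoeff_apply]
  exact constCoeff_prod_one_sub _ (fun k => by nlinarith) 1

lemma main_eq :
    (E 2 * E 5) * (fPS (-1) (-1) 1 9 * fPS (-1) (-1) 3 7) = E 1 * E 10 ^ 3 := by
  ext N
  set n := 2*N+2 with hn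
  have c1 : X^(N+1) ∣ fPS (-1) (-1) 1 9 - phi 1 9 n * ev 10 (poch n) :=
    f_cong 1 9 (by norm_num) (by norm_num) N
  have c2 : X^(N+1) ∣ fPS (-1) (-1) 3 7 - phi 3 7 n * ev 10 (poch n) :=
    f_cong 3 7 (by norm_num) (by norm_num) N
  have cE1 := E_cong 1 (by norm_num) N (10*n) (by omega)
  have cE2 := E_cong 2 (by norm_num) N (5*n) (by omega)
  have cE5 := E_cong 5 (by norm_num) N (2*n) (by omega)
  have cE10 := E_cong 10 (by norm_num) N n (by omega)
  have hL : X ^ (N + 1) ∣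
      (E 2 * E 5) * (fPS (-1) (-1) 1 9 * fPS (-1) (-1) 3 7)
        - ((∏ k ∈ range (5*n), ((1:PowerSeries ℤ) - X^(2+2*k)))
            * (∏ k ∈ range (2*n), ((1:PowerSeries ℤ) - X^(5+5*k)))) *
          ((phi 1 9 n * ev 10 (poch n)) * (phi 3 7 n * ev 10 (poch n))) :=
    dvd_sub_mul' (dvd_sub_mul' cE2 cE5) (dvd_sub_mul' c1 c2)
  have cP3 : X^(N+1) ∣ E 10 ^ 3 - (∏ k ∈ range n, ((1:PowerSeries ℤ) - X^(10+10*k)))^3 := by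
    have e3 : ∀ z : PowerSeries ℤ, z^3 = z*(z*z) := fun z => by ring
    rw [e3, e3]
    exact dvd_sub_mul' cE10 (dvd_sub_mul' cE10 cE10)
  have hR : X ^ (N + 1) ∣ E 1 * E 10 ^ 3
      - (∏ k ∈ range (10*n), ((1:PowerSeries ℤ) - X^(1+1*k)))
        * (∏ k ∈ range n, ((1:PowerSeries ℤ) - X^(10+10*k)))^3 :=
    dvd_sub_mul' cE1 cP3
  rw [coeff_eq_of_dvd hL (by omega), coeff_eq_of_dvd hR (by omega), P10_eq, FID n]

/-- `f(-q,-q⁹)·f(-q³,-q⁷) = E₁E₁₀³/(E₂E₅)`. -/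
theorem theta_prod_eta :
    fPS (-1) (-1) 1 9 * fPS (-1) (-1) 3 7 =
      E 1 * (E 10) ^ 3 * (E 2 * E 5).invOfUnit 1 := by
  have hc : constantCoeff (E 2 * E 5) = ((1 : ℤˣ) : ℤ) := by
    rw [map_mul, constCoeff_E 2 (by norm_num), constCoeff_E 5 (by norm_num)]
    norm_num
  have hu : (E 2 * E 5) * (E 2 * E 5).invOfUnit 1 = 1 :=
    PowerSeries.mul_invOfUnit _ 1 hc
  calc fPS (-1) (-1) 1 9 * fPS (-1) (-1) 3 7
      = ((E 2 * E 5) * (E 2 * E 5).invOfUnit 1) * (fPS (-1) (-1) 1 9 * fPS (-1) (-1) 3 7) := by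
        rw [hu, one_mul]
    _ = (E 2 * E 5).invOfUnit 1 * ((E 2 * E 5) * (fPS (-1) (-1) 1 9 * fPS (-1) (-1) 3 7)) := by
        ring
    _ = (E 2 * E 5).invOfUnit 1 * (E 1 * E 10 ^ 3) := by rw [main_eq]
    _ = E 1 * (E 10) ^ 3 * (E 2 * E 5).invOfUnit 1 := by ring

end Assembly
end

section
/- As formal power series, φ(q)φ(−q⁵) + φ(−q)φ(q⁵) = 2φ(q⁴)φ(q²⁰) − 8q⁶ψ(q⁸)ψ(q⁴⁰). -/
open PowerSeries Finset

/-- `φ(q^c) = ∑_{j∈ℤ} q^{c j²}` as a formal power series over ℤ. -/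
noncomputable def phiT (c : ℕ) : PowerSeries ℤ :=
  PowerSeries.mk fun N => ∑ j ∈ range (N + 1),
    if c * j ^ 2 = N then (if j = 0 then 1 else 2) else 0

/-- `φ(-q^c) = ∑_{j∈ℤ} (-1)^j q^{c j²}` as a formal power series over ℤ
(note `(-q^c)^{j²} = (-1)^j q^{c j²}`). -/
noncomputable def phiM (c : ℕ) : PowerSeries ℤ :=
  PowerSeries.mk fun N => ∑ j ∈ range (N + 1),
    if c * j ^ 2 = N then (if j = 0 then 1 else 2 * (-1) ^ j) else 0

/-- `ψ(q^c) = ∑_{j≥0} q^{c j(j+1)/2}` as a formal power series over ℤ. -/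
noncomputable def psiT (c : ℕ) : PowerSeries ℤ :=
  PowerSeries.mk fun N => ∑ j ∈ range (N + 1),
    if c * (j * (j + 1) / 2) = N then 1 else 0

lemma sum_ite_ext (g : ℕ → ℕ) (hg : ∀ i, i ≤ g i) (w : ℕ → ℤ) {m M : ℕ} (h : m ≤ M) :
    (∑ i ∈ range (m+1), if g i = m then w i else 0)
      = ∑ i ∈ range (M+1), if g i = m then w i else 0 := by
  apply Finset.sum_subset (range_subset_range.2 (by omega))
  intro i _ hi
  rw [mem_range, not_lt] at hi
  rw [if_neg]
  have := hg i; omega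

lemma coeff_mk_mul (g1 g2 : ℕ → ℕ) (w1 w2 : ℕ → ℤ)
    (hg1 : ∀ i, i ≤ g1 i) (hg2 : ∀ i, i ≤ g2 i) (N : ℕ) :
    coeff N (PowerSeries.mk (fun m => ∑ i ∈ range (m+1), if g1 i = m then w1 i else 0)
       * PowerSeries.mk (fun m => ∑ i ∈ range (m+1), if g2 i = m then w2 i else 0)) =
    ∑ i ∈ range (N+1), ∑ j ∈ range (N+1), if g1 i + g2 j = N then w1 i * w2 j else 0 := by
  rw [coeff_mul]
  simp only [coeff_mk]
  have hrw : ∀ p ∈ antidiagonal N,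
      ((∑ i ∈ range (p.1+1), if g1 i = p.1 then w1 i else 0) *
      (∑ j ∈ range (p.2+1), if g2 j = p.2 then w2 j else 0))
      = ∑ i ∈ range (N+1), ∑ j ∈ range (N+1),
          if p = (g1 i, g2 j) then w1 i * w2 j else 0 := by
    intro p hp
    rw [Finset.HasAntidiagonal.mem_antidiagonal] at hp
    rw [sum_ite_ext g1 hg1 w1 (by omega : p.1 ≤ N),
        sum_ite_ext g2 hg2 w2 (by omega : p.2 ≤ N), Finset.sum_mul_sum]
    refine Finset.sum_congr rfl fun i _ => Finset.sum_congr rfl fun j _ => ?_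
    rcases p with ⟨a, b⟩
    by_cases h1 : g1 i = a <;> by_cases h2 : g2 j = b <;>
      simp [h1, h2, Prod.ext_iff] <;> omega
  rw [Finset.sum_congr rfl hrw, Finset.sum_comm]
  refine Finset.sum_congr rfl fun i _ => ?_
  rw [Finset.sum_comm]
  refine Finset.sum_congr rfl fun j _ => ?_
  rw [Finset.sum_ite_eq' (antidiagonal N) ((g1 i, g2 j)) (fun _ => w1 i * w2 j)]
  simp [Finset.HasAntidiagonal.mem_antidiagonal]

lemma ext_double (g : ℕ → ℕ → ℕ) (hg1 : ∀ i j, i ≤ g i j) (hg2 : ∀ i j, j ≤ g i j)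
    (w : ℕ → ℕ → ℤ) {n M : ℕ} (h : n ≤ M) :
    (∑ i ∈ range (n+1), ∑ j ∈ range (n+1), if g i j = n then w i j else 0)
      = ∑ i ∈ range (M+1), ∑ j ∈ range (M+1), if g i j = n then w i j else 0 := by
  have step1 : ∀ i, (∑ j ∈ range (n+1), if g i j = n then w i j else 0)
      = ∑ j ∈ range (M+1), if g i j = n then w i j else 0 := fun i =>
    Finset.sum_subset (range_subset_range.2 (by omega)) (fun j _ hj => by
      rw [mem_range, not_lt] at hj; rw [if_neg]; have := hg2 i j; omega)
  simp_rw [step1]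
  apply Finset.sum_subset (range_subset_range.2 (by omega))
  intro i _ hi
  rw [mem_range, not_lt] at hi
  exact Finset.sum_eq_zero fun j _ => by rw [if_neg]; have := hg1 i j; omega

lemma sum_even_odd (h : ℕ → ℤ) (n : ℕ) :
    ∑ i ∈ range (2*n+2), h i
      = (∑ c ∈ range (n+1), h (2*c)) + ∑ c ∈ range (n+1), h (2*c+1) := by
  induction n with
  | zero => simp [Finset.sum_range_succ]
  | succ n ih =>
    have e : 2*(n+1)+2 = (2*n+2) + 1 + 1 := by ring
    rw [e, Finset.sum_range_succ, Finset.sum_range_succ, ih,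
      Finset.sum_range_succ (fun c => h (2*c)) (n+1),
      Finset.sum_range_succ (fun c => h (2*c+1)) (n+1)]
    have e1 : 2*(n+1) = 2*n+2 := by ring
    have e2 : 2*(n+1)+1 = 2*n+2+1 := by ring
    rw [e1, show 2*n+2+1 = 2*n+3 by omega] at *; ring

def wOne (i : ℕ) : ℤ := if i = 0 then 1 else 2
def wM (i : ℕ) : ℤ := if i = 0 then 1 else 2 * (-1) ^ i
def WW (i j : ℕ) : ℤ := wOne i * wM j + wM i * wOne j

lemma wM_even (c : ℕ) : wM (2*c) = wOne (2*c) := by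
  unfold wM wOne
  by_cases hc : c = 0
  · simp [hc]
  · rw [if_neg (by omega), if_neg (by omega), pow_mul]; norm_num

lemma wM_odd (c : ℕ) : wM (2*c+1) = -2 := by
  unfold wM
  rw [if_neg (by omega), pow_succ, pow_mul]; norm_num

lemma wOne_even (c : ℕ) : wOne (2*c) = wOne c := by
  unfold wOne
  by_cases hc : c = 0 <;> simp [hc]

lemma wOne_odd (c : ℕ) : wOne (2*c+1) = 2 := by
  unfold wOne; rw [if_neg (by omega)]

lemma WW_ee (c d : ℕ) : WW (2*c) (2*d) = 2 * (wOne c * wOne d) := by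
  unfold WW
  rw [wM_even, wM_even, wOne_even, wOne_even]; ring

lemma WW_eo (c d : ℕ) : WW (2*c) (2*d+1) = 0 := by
  unfold WW
  rw [wM_even, wM_odd, wOne_odd]; ring

lemma WW_oe (c d : ℕ) : WW (2*c+1) (2*d) = 0 := by
  unfold WW
  rw [wM_even, wM_odd, wOne_odd]; ring

lemma WW_oo (c d : ℕ) : WW (2*c+1) (2*d+1) = -8 := by
  unfold WW
  rw [wM_odd, wM_odd, wOne_odd, wOne_odd]; ring

lemma le_sq (a i : ℕ) (ha : 1 ≤ a) : i ≤ a * i ^ 2 := by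
  have h : i ≤ i ^ 2 := by nlinarith
  nlinarith

lemma le_tri (a i : ℕ) (ha : 1 ≤ a) : i ≤ a * (i * (i + 1) / 2) := by
  obtain ⟨r, hr⟩ := Nat.even_mul_succ_self i
  have h4 : 2 * i ≤ i * (i + 1) := by nlinarith
  have hq : i * (i + 1) / 2 = r := by omega
  rw [hq]
  have h3 : 1 * r ≤ a * r := Nat.mul_le_mul_right r ha
  omega

lemma split2 (N : ℕ) (F : ℕ → ℕ → ℤ) :
    (∑ i ∈ range (2*N+2), ∑ j ∈ range (2*N+2), F i j)
    = (((∑ c ∈ range (N+1), ∑ d ∈ range (N+1), F (2*c) (2*d))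
      + ∑ c ∈ range (N+1), ∑ d ∈ range (N+1), F (2*c) (2*d+1))
      + ∑ c ∈ range (N+1), ∑ d ∈ range (N+1), F (2*c+1) (2*d))
      + ∑ c ∈ range (N+1), ∑ d ∈ range (N+1), F (2*c+1) (2*d+1) := by
  rw [sum_even_odd (fun i => ∑ j ∈ range (2*N+2), F i j) N,
    Finset.sum_congr rfl (fun c _ => sum_even_odd (fun j => F (2*c) j) N),
    Finset.sum_congr rfl (fun c _ => sum_even_odd (fun j => F (2*c+1) j) N),
    Finset.sum_add_distrib, Finset.sum_add_distrib]
  ring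

/-- `φ(q)φ(-q⁵) + φ(-q)φ(q⁵) = 2φ(q⁴)φ(q²⁰) - 8q⁶ψ(q⁸)ψ(q⁴⁰)`. -/
theorem phi_sum :
    phiT 1 * phiM 5 + phiM 1 * phiT 5 =
      2 * phiT 4 * phiT 20 - 8 * X ^ 6 * psiT 8 * psiT 40 := by
  ext N
  rw [map_add, map_sub]
  have hA : coeff N (phiT 1 * phiM 5) =
      ∑ i ∈ range (N+1), ∑ j ∈ range (N+1),
        if 1*i^2 + 5*j^2 = N then wOne i * wM j else 0 := by
    simp only [phiT, phiM]
    exact coeff_mk_mul (fun i => 1*i^2) (fun j => 5*j^2) wOne wM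
      (fun i => le_sq 1 i (by norm_num)) (fun j => le_sq 5 j (by norm_num)) N
  have hB : coeff N (phiM 1 * phiT 5) =
      ∑ i ∈ range (N+1), ∑ j ∈ range (N+1),
        if 1*i^2 + 5*j^2 = N then wM i * wOne j else 0 := by
    simp only [phiT, phiM]
    exact coeff_mk_mul (fun i => 1*i^2) (fun j => 5*j^2) wM wOne
      (fun i => le_sq 1 i (by norm_num)) (fun j => le_sq 5 j (by norm_num)) N
  have hC : coeff N (2 * phiT 4 * phiT 20) =
      2 * ∑ c ∈ range (N+1), ∑ d ∈ range (N+1),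
        (if 4*c^2 + 20*d^2 = N then wOne c * wOne d else 0) := by
    rw [mul_assoc, show (2 : PowerSeries ℤ) = C (2:ℤ) from (map_ofNat (C (R := ℤ)) 2).symm,
      coeff_C_mul]
    simp only [phiT]
    congr 1
    exact coeff_mk_mul (fun i => 4*i^2) (fun j => 20*j^2) wOne wOne
      (fun i => le_sq 4 i (by norm_num)) (fun j => le_sq 20 j (by norm_num)) N
  have hD : coeff N (8 * X^6 * psiT 8 * psiT 40) =
      if 6 ≤ N then 8 * ∑ c ∈ range (N-6+1), ∑ d ∈ range (N-6+1),
        (if 8*(c*(c+1)/2) + 40*(d*(d+1)/2) = N-6 then (1:ℤ) * 1 else 0) else 0 := by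
    rw [show (8 : PowerSeries ℤ) * X^6 * psiT 8 * psiT 40
        = X^6 * (C (8:ℤ) * (psiT 8 * psiT 40)) from by
      rw [show C (8:ℤ) = (8 : PowerSeries ℤ) from map_ofNat (C (R := ℤ)) 8]; ring]
    rw [coeff_X_pow_mul']
    split_ifs with h6
    · rw [coeff_C_mul]
      simp only [psiT]
      congr 1
      exact coeff_mk_mul (fun i => 8*(i*(i+1)/2)) (fun j => 40*(j*(j+1)/2))
        (fun _ => 1) (fun _ => 1)
        (fun i => le_tri 8 i (by norm_num)) (fun j => le_tri 40 j (by norm_num)) (N-6)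
    · rfl
  rw [hA, hB, hC, hD, ← Finset.sum_add_distrib]
  simp_rw [← Finset.sum_add_distrib]
  have hcomb : ∀ i j : ℕ,
      ((if 1*i^2 + 5*j^2 = N then wOne i * wM j else 0)
        + if 1*i^2 + 5*j^2 = N then wM i * wOne j else 0)
      = if 1*i^2 + 5*j^2 = N then WW i j else 0 := by
    intro i j; unfold WW; split_ifs <;> ring
  simp_rw [hcomb]
  rw [ext_double (fun i j => 1*i^2 + 5*j^2)
    (fun i j => by show i ≤ 1*i^2 + 5*j^2; have := le_sq 1 i (by norm_num); omega)
    (fun i j => by show j ≤ 1*i^2 + 5*j^2; have := le_sq 5 j (by norm_num); omega)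
    WW (by omega : N ≤ 2*N+1)]
  rw [show (2*N+1)+1 = 2*N+2 by omega]
  rw [split2 N (fun i j => if 1*i^2 + 5*j^2 = N then WW i j else 0)]
  have hEO : (∑ c ∈ range (N+1), ∑ d ∈ range (N+1),
      (if 1*(2*c)^2 + 5*(2*d+1)^2 = N then WW (2*c) (2*d+1) else 0)) = 0 :=
    Finset.sum_eq_zero fun c _ => Finset.sum_eq_zero fun d _ => by
      rw [WW_eo]; exact ite_self 0
  have hOE : (∑ c ∈ range (N+1), ∑ d ∈ range (N+1),
      (if 1*(2*c+1)^2 + 5*(2*d)^2 = N then WW (2*c+1) (2*d) else 0)) = 0 :=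
    Finset.sum_eq_zero fun c _ => Finset.sum_eq_zero fun d _ => by
      rw [WW_oe]; exact ite_self 0
  have hEE : (∑ c ∈ range (N+1), ∑ d ∈ range (N+1),
      (if 1*(2*c)^2 + 5*(2*d)^2 = N then WW (2*c) (2*d) else 0))
      = 2 * ∑ c ∈ range (N+1), ∑ d ∈ range (N+1),
        (if 4*c^2 + 20*d^2 = N then wOne c * wOne d else 0) := by
    rw [Finset.mul_sum]
    refine Finset.sum_congr rfl fun c _ => ?_
    rw [Finset.mul_sum]
    refine Finset.sum_congr rfl fun d _ => ?_
    rw [show 1*(2*c)^2 + 5*(2*d)^2 = 4*c^2 + 20*d^2 from by ring, WW_ee]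
    split_ifs <;> ring
  have hOO : (∑ c ∈ range (N+1), ∑ d ∈ range (N+1),
      (if 1*(2*c+1)^2 + 5*(2*d+1)^2 = N then WW (2*c+1) (2*d+1) else 0))
      = -(if 6 ≤ N then 8 * ∑ c ∈ range (N-6+1), ∑ d ∈ range (N-6+1),
        (if 8*(c*(c+1)/2) + 40*(d*(d+1)/2) = N-6 then (1:ℤ) * 1 else 0) else 0) := by
    split_ifs with h6
    · rw [ext_double (fun i j => 8*(i*(i+1)/2) + 40*(j*(j+1)/2))
        (fun i j => by show i ≤ 8*(i*(i+1)/2) + 40*(j*(j+1)/2); have := le_tri 8 i (by norm_num); omega)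
        (fun i j => by show j ≤ 8*(i*(i+1)/2) + 40*(j*(j+1)/2); have := le_tri 40 j (by norm_num); omega)
        (fun _ _ => (1:ℤ) * 1) (by omega : N-6 ≤ N)]
      rw [Finset.mul_sum, ← Finset.sum_neg_distrib]
      refine Finset.sum_congr rfl fun c _ => ?_
      rw [Finset.mul_sum, ← Finset.sum_neg_distrib]
      refine Finset.sum_congr rfl fun d _ => ?_
      obtain ⟨r, hr⟩ := Nat.even_mul_succ_self c
      obtain ⟨s, hs⟩ := Nat.even_mul_succ_self d
      have e1 : 1*(2*c+1)^2 + 5*(2*d+1)^2 = 4*(c*(c+1)) + 20*(d*(d+1)) + 6 := by ring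
      rw [e1, WW_oo]
      have hiff : (4*(c*(c+1)) + 20*(d*(d+1)) + 6 = N)
          ↔ (8*(c*(c+1)/2) + 40*(d*(d+1)/2) = N-6) := by omega
      rw [if_congr hiff rfl rfl]
      split_ifs <;> ring
    · rw [neg_zero]
      refine Finset.sum_eq_zero fun c _ => Finset.sum_eq_zero fun d _ => ?_
      rw [if_neg]
      have e1 : 1*(2*c+1)^2 + 5*(2*d+1)^2 = 4*(c*(c+1)) + 20*(d*(d+1)) + 6 := by ring
      omega
  rw [hEO, hOE, hEE, hOO]
  ring
end
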